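/- arXiv:1904.06662 — 6 statements merged into one kernel-verified Lean document; each statement's English description precedes it below -/
import Mathlib

section
/- Let G = (V,E) be a bipartite multigraph and let v ∈ V. Then G is f_v-edge-choosable, where f_v(e) = d_G(v) if the edge e is incident to v, and f_v(e) = χ'(G) otherwise. -/
open scoped Classical

/-- A multigraph on vertex type `V` with edge type `E`: each edge has a pair of
distinct endpoints (no loops); multiple edges with the same endpoints are allowed. -/
structure Multigraph (V : Type*) (E : Type*) where
  ends : E → Sym2 V
  not_isDiag : ∀ e, ¬ (ends e).IsDiag

namespace Multigraph

variable {V E : Type*}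

/-- The line graph of a multigraph: vertices are the edges of `G`,
two of them adjacent iff the corresponding edges share an endpoint. -/
def lineGraph (G : Multigraph V E) : SimpleGraph E where
  Adj e q := e ≠ q ∧ ∃ x, x ∈ G.ends e ∧ x ∈ G.ends q
  symm := by
    constructor
    rintro e q ⟨hne, x, he, hq⟩
    exact ⟨hne.symm, x, hq, he⟩
  loopless := ⟨fun e h => h.1 rfl⟩

/-- The degree of a vertex: the number of incident edges. -/
noncomputable def degree (G : Multigraph V E) (x : V) : ℕ :=
  {e : E | x ∈ G.ends e}.ncard

end Multigraph

/-- A simple graph `H` is `f`-choosable if from any assignment of color lists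
of sizes prescribed by `f` one can choose a proper coloring. -/
def Choosable {α : Type*} (H : SimpleGraph α) (f : α → ℕ) : Prop :=
  ∀ A : α → Finset ℕ, (∀ x, (A x).card = f x) →
    ∃ c : α → ℕ, (∀ x, c x ∈ A x) ∧ ∀ ⦃x y⦄, H.Adj x y → c x ≠ c y

/-- The chromatic number of a simple graph, as a natural number. -/
noncomputable def chromNum {α : Type*} (H : SimpleGraph α) : ℕ :=
  sInf {n | H.Colorable n}

/-- The choice number (list chromatic number) of a simple graph. -/
noncomputable def listChromNum {α : Type*} (H : SimpleGraph α) : ℕ :=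
  sInf {n | Choosable H fun _ => n}

/-- The clique number: the size of a maximum clique. -/
noncomputable def cliqNum {α : Type*} (H : SimpleGraph α) : ℕ :=
  sSup {n | ∃ s : Finset α, H.IsNClique n s}

/-- A graph is perfect if every induced subgraph has chromatic number
equal to its clique number. -/
def IsPerfect {α : Type*} (H : SimpleGraph α) : Prop :=
  ∀ s : Set α, chromNum (H.induce s) = cliqNum (H.induce s)

/-- Existence of a kernel (stable matching) in the Galvin orientation of the
line graph of a bipartite multigraph, where `a e` / `b e` are the two endpoints
of edge `e` (on the two sides) and `ψ` is a proper edge coloring. -/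
lemma galvin_kernel {E W : Type*} [Fintype E] (a b : E → W) (ψ : E → ℕ)
    (hproper : ∀ e f, e ≠ f → (a e = a f ∨ b e = b f) → ψ e ≠ ψ f) :
    ∀ T : Finset E, ∃ K : Finset E, K ⊆ T ∧
      (∀ e ∈ K, ∀ f ∈ K, e ≠ f → a e ≠ a f ∧ b e ≠ b f) ∧
      (∀ e ∈ T, e ∉ K → ∃ f ∈ K, e ≠ f ∧
        ((a e = a f ∧ ψ e < ψ f) ∨ (b e = b f ∧ ψ f < ψ e))) := by
  intro T
  induction T using Finset.strongInduction with
  | _ T ih =>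
    -- P : the set of "favorite" edges: maximal ψ among T-edges with the same a-endpoint
    set P : Finset E := T.filter (fun e => ∀ f ∈ T, a f = a e → ψ f ≤ ψ e) with hP
    by_cases hind : ∀ e ∈ P, ∀ f ∈ P, e ≠ f → b e ≠ b f
    · -- P is independent, it is a kernel
      refine ⟨P, Finset.filter_subset _ _, ?_, ?_⟩
      · intro e he f hf hef
        refine ⟨?_, hind e he f hf hef⟩
        intro haef
        have h1 := (Finset.mem_filter.1 he).2 f (Finset.filter_subset _ _ hf) haef.symm
        have h2 := (Finset.mem_filter.1 hf).2 e (Finset.filter_subset _ _ he) haef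
        exact hproper e f hef (Or.inl haef) (le_antisymm h2 h1)
      · intro e heT heP
        -- the favorite of a e exists
        have hne : (T.filter (fun f => a f = a e)).Nonempty :=
          ⟨e, Finset.mem_filter.2 ⟨heT, rfl⟩⟩
        obtain ⟨g, hg, hgmax⟩ := Finset.exists_max_image _ ψ hne
        have hgT : g ∈ T := (Finset.mem_filter.1 hg).1
        have hga : a g = a e := (Finset.mem_filter.1 hg).2
        have hgP : g ∈ P := by
          refine Finset.mem_filter.2 ⟨hgT, ?_⟩
          intro f hf haf
          exact hgmax f (Finset.mem_filter.2 ⟨hf, by rw [haf, hga]⟩)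
        have heg : e ≠ g := by rintro rfl; exact heP hgP
        have hle : ψ e ≤ ψ g := hgmax e (Finset.mem_filter.2 ⟨heT, rfl⟩)
        exact ⟨g, hgP, heg, Or.inl ⟨hga.symm, lt_of_le_of_ne hle
          (hproper e g heg (Or.inl hga.symm))⟩⟩
    · -- two favorites share a b-endpoint; reject the worse one and recurse
      push_neg at hind
      obtain ⟨e1, he1, e2, he2, hne12, hb12⟩ := hind
      have hψne : ψ e1 ≠ ψ e2 := hproper e1 e2 hne12 (Or.inr hb12)
      -- wlog ψ e1 < ψ e2
      obtain ⟨d1, d2, hd1, hd2, hEne, hEb, hlt⟩ :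
          ∃ d1 d2, d1 ∈ P ∧ d2 ∈ P ∧ d1 ≠ d2 ∧ b d1 = b d2 ∧ ψ d1 < ψ d2 := by
        rcases lt_or_gt_of_ne hψne with h | h
        · exact ⟨e1, e2, he1, he2, hne12, hb12, h⟩
        · exact ⟨e2, e1, he2, he1, hne12.symm, hb12.symm, h⟩
      have hd2T : d2 ∈ T := Finset.filter_subset _ _ hd2
      have hd1T : d1 ∈ T := Finset.filter_subset _ _ hd1
      obtain ⟨K, hKT, hKind, hKdom⟩ := ih (T.erase d2) (Finset.erase_ssubset hd2T)
      refine ⟨K, hKT.trans (Finset.erase_subset _ _), hKind, ?_⟩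
      intro e heT heK
      by_cases he2' : e = d2
      · by_cases hd1K : d1 ∈ K
        · exact ⟨d1, hd1K, by rw [he2']; exact hEne.symm,
            Or.inr ⟨by rw [he2']; exact hEb.symm, by rw [he2']; exact hlt⟩⟩
        · have hd1T' : d1 ∈ T.erase d2 := Finset.mem_erase.2 ⟨hEne, hd1T⟩
          obtain ⟨g, hgK, hgne, hg⟩ := hKdom d1 hd1T' hd1K
          rcases hg with ⟨hga, hglt⟩ | ⟨hgb, hglt⟩
          · -- contradicts d1 being a favorite
            exact absurd ((Finset.mem_filter.1 hd1).2 g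
              (Finset.mem_of_mem_erase (hKT hgK)) hga.symm) (not_le.2 hglt)
          · refine ⟨g, hgK, ?_, Or.inr ⟨by rw [he2']; exact hEb.symm.trans hgb,
              by rw [he2']; exact hglt.trans hlt⟩⟩
            rintro rfl
            exact (Finset.mem_erase.1 (hKT hgK)).1 he2'
      · obtain ⟨g, hgK, hgne, hg⟩ := hKdom e (Finset.mem_erase.2 ⟨he2', heT⟩) heK
        exact ⟨g, hgK, hgne, hg⟩

/-- The Bondy–Boppana–Siegel kernel lemma: if every induced subdigraph of an
orientation `D` of `H` has a kernel, and each vertex has a list larger than its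
out-degree, then lists can be properly chosen. -/
lemma kernel_choosable {E : Type*} [Fintype E] (H : SimpleGraph E) (D : E → E → Prop)
    (hDH : ∀ e f, D e f → H.Adj e f)
    (hker : ∀ T : Finset E, ∃ K : Finset E, K ⊆ T ∧
      (∀ e ∈ K, ∀ f ∈ K, ¬ H.Adj e f) ∧ (∀ e ∈ T, e ∉ K → ∃ f ∈ K, D e f)) :
    ∀ S : Finset E, ∀ A : E → Finset ℕ,
      (∀ e ∈ S, (S.filter (fun f => D e f)).card < (A e).card) →
      ∃ c : E → ℕ, ∀ e ∈ S, c e ∈ A e ∧ ∀ f ∈ S, H.Adj e f → c e ≠ c f := by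
  intro S
  induction S using Finset.strongInduction with
  | _ S ih =>
    intro A hA
    rcases S.eq_empty_or_nonempty with rfl | ⟨e0, he0⟩
    · exact ⟨fun _ => 0, by simp⟩
    have hA0 : (A e0).Nonempty := Finset.card_pos.1 (lt_of_le_of_lt (Nat.zero_le _) (hA e0 he0))
    obtain ⟨α, hα⟩ := hA0
    set T : Finset E := S.filter (fun e => α ∈ A e) with hT
    obtain ⟨K, hKT, hKind, hKdom⟩ := hker T
    have he0T : e0 ∈ T := Finset.mem_filter.2 ⟨he0, hα⟩
    have hKne : K.Nonempty := by
      by_cases h : e0 ∈ K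
      · exact ⟨e0, h⟩
      · obtain ⟨f, hf, -⟩ := hKdom e0 he0T h
        exact ⟨f, hf⟩
    have hKS : K ⊆ S := hKT.trans (Finset.filter_subset _ _)
    have hS' : S \ K ⊂ S := Finset.sdiff_ssubset hKS hKne
    set A' : E → Finset ℕ := fun e => if e ∈ T then (A e).erase α else A e with hA'
    have hinv : ∀ e ∈ S \ K, (((S \ K)).filter (fun f => D e f)).card < (A' e).card := by
      intro e he
      obtain ⟨heS, heK⟩ := Finset.mem_sdiff.1 he
      by_cases heT : e ∈ T
      · obtain ⟨g, hgK, hgD⟩ := hKdom e heT heK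
        have hgmem : g ∈ S.filter (fun f => D e f) := Finset.mem_filter.2 ⟨hKS hgK, hgD⟩
        have hsub : (S \ K).filter (fun f => D e f) ⊆ (S.filter (fun f => D e f)).erase g := by
          intro f hf
          obtain ⟨hf1, hf2⟩ := Finset.mem_filter.1 hf
          obtain ⟨hfS, hfK⟩ := Finset.mem_sdiff.1 hf1
          exact Finset.mem_erase.2 ⟨fun h => hfK (h ▸ hgK), Finset.mem_filter.2 ⟨hfS, hf2⟩⟩
        have h1 := Finset.card_le_card hsub
        rw [Finset.card_erase_of_mem hgmem] at h1
        have h2 := hA e heS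
        have h3 : α ∈ A e := (Finset.mem_filter.1 heT).2
        have h4 : 0 < (S.filter (fun f => D e f)).card := Finset.card_pos.2 ⟨g, hgmem⟩
        have h5 : (A' e).card = (A e).card - 1 := by
          rw [hA']; simp only [if_pos heT]; exact Finset.card_erase_of_mem h3
        omega
      · have hsub : (S \ K).filter (fun f => D e f) ⊆ S.filter (fun f => D e f) :=
          Finset.filter_subset_filter _ (Finset.sdiff_subset)
        have h1 := Finset.card_le_card hsub
        have h2 := hA e heS
        have h5 : A' e = A e := by rw [hA']; simp only [if_neg heT]
        rw [h5]; omega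
    obtain ⟨c', hc'⟩ := ih (S \ K) hS' A' hinv
    refine ⟨fun e => if e ∈ K then α else c' e, ?_⟩
    intro e heS
    have hmemA : ∀ x ∈ S \ K, c' x ∈ A x ∧ (x ∈ T → c' x ≠ α) := by
      intro x hx
      have h1 := (hc' x hx).1
      by_cases hxT : x ∈ T
      · have : c' x ∈ (A x).erase α := by simpa [hA', hxT] using h1
        exact ⟨Finset.mem_of_mem_erase this, fun _ => (Finset.mem_erase.1 this).1⟩
      · exact ⟨by simpa [hA', hxT] using h1, fun h => absurd h hxT⟩
    constructor
    · by_cases heK : e ∈ K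
      · simp only [if_pos heK]
        exact (Finset.mem_filter.1 (hKT heK)).2
      · simp only [if_neg heK]
        exact (hmemA e (Finset.mem_sdiff.2 ⟨heS, heK⟩)).1
    · intro f hfS hadj
      have hcne : ∀ x ∈ S, x ∉ K → (if x ∈ K then α else c' x) ≠ α := by
        intro x hxS hxK
        simp only [if_neg hxK]
        by_cases hxT : x ∈ T
        · exact (hmemA x (Finset.mem_sdiff.2 ⟨hxS, hxK⟩)).2 hxT
        · intro h
          exact hxT (Finset.mem_filter.2 ⟨hxS, h ▸ (hmemA x (Finset.mem_sdiff.2 ⟨hxS, hxK⟩)).1⟩)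
      by_cases heK : e ∈ K <;> by_cases hfK : f ∈ K
      · exact absurd hadj (hKind e heK f hfK)
      · simp only [if_pos heK]
        exact fun h => hcne f hfS hfK h.symm
      · simp only [if_pos hfK]
        exact hcne e heS heK
      · simp only [if_neg heK, if_neg hfK]
        exact (hc' e (Finset.mem_sdiff.2 ⟨heS, heK⟩)).2 f (Finset.mem_sdiff.2 ⟨hfS, hfK⟩) hadj

/-- For a bipartite multigraph `G` and any vertex `v`, `G` is `f_v`-edge-choosable,
where `f_v(e) = d_G(v)` for edges incident to `v` and `f_v(e) = χ'(G)` otherwise. -/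
theorem stmt_2 {V E : Type*} [Fintype V] [Fintype E] (G : Multigraph V E)
    (hbip : ∃ X : Set V, ∀ (e : E) (u w : V), G.ends e = s(u, w) → (u ∈ X ↔ w ∉ X))
    (v : V) :
    Choosable (Multigraph.lineGraph G)
      (fun e => if v ∈ G.ends e then G.degree v else chromNum (Multigraph.lineGraph G)) := by

  classical
  -- arrange the bipartition so that `v` is on the `X` side
  obtain ⟨X0, hX0⟩ := hbip
  set X : Set V := if v ∈ X0 then X0 else X0ᶜ with hXdef
  have hX : ∀ (e : E) (u w : V), G.ends e = s(u, w) → (u ∈ X ↔ w ∉ X) := by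
    intro e u w h
    by_cases hv : v ∈ X0
    · simpa [hXdef, hv] using hX0 e u w h
    · have := hX0 e u w h
      simp only [hXdef, if_neg hv, Set.mem_compl_iff]
      tauto
  have hvX : v ∈ X := by by_cases hv : v ∈ X0 <;> simp [hXdef, hv]
  -- choose for each edge its `X`-endpoint `a e` and non-`X`-endpoint `b e`
  have hend : ∀ e : E, ∃ u w : V, G.ends e = s(u, w) ∧ u ∈ X ∧ w ∉ X := by
    intro e
    obtain ⟨⟨u, w⟩, h⟩ := Quot.exists_rep (G.ends e)
    have h' : G.ends e = s(u, w) := h.symm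
    by_cases hu : u ∈ X
    · exact ⟨u, w, h', hu, (hX e u w h').1 hu⟩
    · have hw : w ∈ X := by
        by_contra hw
        exact hu ((hX e u w h').2 hw)
      exact ⟨w, u, h'.trans (Sym2.eq_swap), hw, hu⟩
  choose a b hab ha hb using hend
  have hmem : ∀ (e : E) (z : V), z ∈ G.ends e ↔ z = a e ∨ z = b e := by
    intro e z; rw [hab e, Sym2.mem_iff]
  have hane : ∀ e f, a e ≠ b f := fun e f h => hb f (h ▸ ha e)
  have hshare : ∀ e f, e ≠ f → (a e = a f ∨ b e = b f) →
      (Multigraph.lineGraph G).Adj e f := by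
    intro e f hne h
    rcases h with h | h
    · exact ⟨hne, a e, (hmem e _).2 (Or.inl rfl), (hmem f _).2 (Or.inl h)⟩
    · exact ⟨hne, b e, (hmem e _).2 (Or.inr rfl), (hmem f _).2 (Or.inr h)⟩
  -- a proper coloring with `k = χ'` colors
  set k := chromNum (Multigraph.lineGraph G) with hk
  have hcolk : (Multigraph.lineGraph G).Colorable k := by
    rw [hk, chromNum]
    have hmemcol : Fintype.card E ∈ {n | (Multigraph.lineGraph G).Colorable n} :=
      (Multigraph.lineGraph G).colorable_of_fintype
    exact Nat.sInf_mem ⟨_, hmemcol⟩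
  obtain ⟨C⟩ := hcolk
  set φ : E → ℕ := fun e => (C e : ℕ) with hφ
  have hφlt : ∀ e, φ e < k := fun e => (C e).isLt
  have hφproper : ∀ {e f}, (Multigraph.lineGraph G).Adj e f → φ e ≠ φ f := by
    intro e f hadj h
    exact C.valid hadj (Fin.val_injective h)
  -- the colors at `v`
  set d := G.degree v with hd
  set Ev : Finset E := Finset.univ.filter (fun e => v ∈ G.ends e) with hEv
  have hEvcard : Ev.card = d := by
    rw [hd, Multigraph.degree]
    have h : {e : E | v ∈ G.ends e} = ↑Ev := by ext e; simp [hEv]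
    rw [h, Set.ncard_coe_finset]
  have hmemEv : ∀ e, e ∈ Ev ↔ v ∈ G.ends e := by
    intro e; simp [hEv]
  have hvEv : ∀ e ∈ Ev, v = a e := by
    intro e he
    rcases (hmem e v).1 ((hmemEv e).1 he) with h | h
    · exact h
    · exact absurd (h ▸ hvX) (hb e)
  have hinjEv : Set.InjOn φ ↑Ev := by
    intro e he f hf h
    by_contra hne
    exact hφproper ⟨hne, v, (hmemEv e).1 he, (hmemEv f).1 hf⟩ h
  set S : Finset ℕ := Ev.image φ with hS
  have hScard : S.card = d := by
    rw [hS, Finset.card_image_of_injOn hinjEv, hEvcard]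
  have hSsub : S ⊆ Finset.range k := by
    intro n hn
    obtain ⟨e, -, rfl⟩ := Finset.mem_image.1 hn
    exact Finset.mem_range.2 (hφlt e)
  have hdk : d ≤ k := by
    have := Finset.card_le_card hSsub
    rwa [hScard, Finset.card_range] at this
  -- a recoloring `σ` permuting the colors so that the colors at `v` become `{0, …, d-1}`
  have hcard1 : S.card = (Finset.range d).card := by rw [hScard, Finset.card_range]
  have hcard2 : (Finset.range k \ S).card = (Finset.range k \ Finset.range d).card := by
    rw [Finset.card_sdiff_of_subset hSsub, Finset.card_sdiff_of_subset (Finset.range_subset_range.2 hdk),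
      Finset.card_range, Finset.card_range, hScard]
  set e1 := Finset.equivOfCardEq hcard1 with he1
  set e2 := Finset.equivOfCardEq hcard2 with he2
  set σ : ℕ → ℕ := fun n =>
    if h : n ∈ S then (e1 ⟨n, h⟩ : ℕ)
    else if h2 : n ∈ Finset.range k \ S then (e2 ⟨n, h2⟩ : ℕ) else n with hσ
  have hσS : ∀ n (h : n ∈ S), σ n ∈ Finset.range d := by
    intro n h
    have : σ n = (e1 ⟨n, h⟩ : ℕ) := by rw [hσ]; exact dif_pos h
    rw [this]; exact (e1 ⟨n, h⟩).2
  have hσS' : ∀ n (h : n ∈ Finset.range k \ S), σ n ∈ Finset.range k \ Finset.range d := by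
    intro n h
    have : σ n = (e2 ⟨n, h⟩ : ℕ) := by
      rw [hσ]; dsimp only
      rw [dif_neg (Finset.mem_sdiff.1 h).2, dif_pos h]
    rw [this]; exact (e2 ⟨n, h⟩).2
  have hσinj : ∀ m ∈ Finset.range k, ∀ n ∈ Finset.range k, σ m = σ n → m = n := by
    intro m hm n hn h
    by_cases h1 : m ∈ S <;> by_cases h2 : n ∈ S
    · have em : σ m = (e1 ⟨m, h1⟩ : ℕ) := by rw [hσ]; exact dif_pos h1
      have en : σ n = (e1 ⟨n, h2⟩ : ℕ) := by rw [hσ]; exact dif_pos h2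
      have : e1 ⟨m, h1⟩ = e1 ⟨n, h2⟩ := Subtype.ext (by rw [← em, ← en, h])
      exact congrArg Subtype.val (e1.injective this)
    · exfalso
      have hm1 := hσS m h1
      have hn1 := hσS' n (Finset.mem_sdiff.2 ⟨hn, h2⟩)
      rw [h] at hm1
      exact (Finset.mem_sdiff.1 hn1).2 hm1
    · exfalso
      have hn1 := hσS n h2
      have hm1 := hσS' m (Finset.mem_sdiff.2 ⟨hm, h1⟩)
      rw [h] at hm1
      exact (Finset.mem_sdiff.1 hm1).2 hn1
    · have em : σ m = (e2 ⟨m, Finset.mem_sdiff.2 ⟨hm, h1⟩⟩ : ℕ) := by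
        rw [hσ]; dsimp only
        rw [dif_neg h1, dif_pos (Finset.mem_sdiff.2 ⟨hm, h1⟩)]
      have en : σ n = (e2 ⟨n, Finset.mem_sdiff.2 ⟨hn, h2⟩⟩ : ℕ) := by
        rw [hσ]; dsimp only
        rw [dif_neg h2, dif_pos (Finset.mem_sdiff.2 ⟨hn, h2⟩)]
      have : e2 ⟨m, Finset.mem_sdiff.2 ⟨hm, h1⟩⟩ = e2 ⟨n, Finset.mem_sdiff.2 ⟨hn, h2⟩⟩ :=
        Subtype.ext (by rw [← em, ← en, h])
      exact congrArg Subtype.val (e2.injective this)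
  -- the recolored proper coloring `ψ`
  set ψ : E → ℕ := fun e => σ (φ e) with hψ
  have hψv : ∀ e ∈ Ev, ψ e < d := by
    intro e he
    exact Finset.mem_range.1 (hσS (φ e) (Finset.mem_image_of_mem φ he))
  have hψk : ∀ e, ψ e < k := by
    intro e
    by_cases h : φ e ∈ S
    · exact lt_of_lt_of_le (Finset.mem_range.1 (hσS (φ e) h)) hdk
    · exact Finset.mem_range.1 (Finset.mem_sdiff.1
        (hσS' (φ e) (Finset.mem_sdiff.2 ⟨Finset.mem_range.2 (hφlt e), h⟩))).1
  have hψproper : ∀ {e f}, (Multigraph.lineGraph G).Adj e f → ψ e ≠ ψ f := by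
    intro e f hadj h
    exact hφproper hadj
      (hσinj (φ e) (Finset.mem_range.2 (hφlt e)) (φ f) (Finset.mem_range.2 (hφlt f)) h)
  -- the Galvin orientation
  set D : E → E → Prop := fun e f => e ≠ f ∧
    ((a e = a f ∧ ψ e < ψ f) ∨ (b e = b f ∧ ψ f < ψ e)) with hD
  have hDH : ∀ e f, D e f → (Multigraph.lineGraph G).Adj e f := by
    rintro e f ⟨hne, h | h⟩
    · exact hshare e f hne (Or.inl h.1)
    · exact hshare e f hne (Or.inr h.1)
  have hproper' : ∀ e f, e ≠ f → (a e = a f ∨ b e = b f) → ψ e ≠ ψ f :=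
    fun e f hne hsh => hψproper (hshare e f hne hsh)
  have hker : ∀ T : Finset E, ∃ K : Finset E, K ⊆ T ∧
      (∀ e ∈ K, ∀ f ∈ K, ¬ (Multigraph.lineGraph G).Adj e f) ∧
      (∀ e ∈ T, e ∉ K → ∃ f ∈ K, D e f) := by
    intro T
    obtain ⟨K, hKT, hKind, hKdom⟩ := galvin_kernel a b ψ hproper' T
    refine ⟨K, hKT, ?_, hKdom⟩
    rintro e he f hf ⟨hne, z, hz1, hz2⟩
    obtain ⟨hna, hnb⟩ := hKind e he f hf hne
    rcases (hmem e z).1 hz1 with h1 | h1 <;> rcases (hmem f z).1 hz2 with h2 | h2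
    · exact hna (h1.symm.trans h2)
    · exact hane e f (h1.symm.trans h2)
    · exact hane f e (h2.symm.trans h1)
    · exact hnb (h1.symm.trans h2)
  -- out-degree bounds
  intro A hA
  have hbound : ∀ e ∈ (Finset.univ : Finset E),
      ((Finset.univ : Finset E).filter (fun f => D e f)).card < (A e).card := by
    intro e _
    have hAe : (A e).card = (if v ∈ G.ends e then d else k) := hA e
    rw [hAe]
    set B : ℕ := if v ∈ G.ends e then d else k with hB
    have hc0B : ψ e < B := by
      by_cases h : v ∈ G.ends e
      · rw [hB, if_pos h]; exact hψv e ((hmemEv e).2 h)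
      · rw [hB, if_neg h]; exact hψk e
    set F1 : Finset E := Finset.univ.filter (fun f => f ≠ e ∧ a f = a e ∧ ψ e < ψ f) with hF1
    set F2 : Finset E := Finset.univ.filter (fun f => f ≠ e ∧ b f = b e ∧ ψ f < ψ e) with hF2
    have hsub : (Finset.univ : Finset E).filter (fun f => D e f) ⊆ F1 ∪ F2 := by
      intro f hf
      obtain ⟨hne, h⟩ := (Finset.mem_filter.1 hf).2
      rcases h with ⟨h1, h2⟩ | ⟨h1, h2⟩
      · exact Finset.mem_union_left _ (Finset.mem_filter.2 ⟨Finset.mem_univ f, hne.symm, h1.symm, h2⟩)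
      · exact Finset.mem_union_right _ (Finset.mem_filter.2 ⟨Finset.mem_univ f, hne.symm, h1.symm, h2⟩)
    have hcF1 : F1.card ≤ B - (ψ e + 1) := by
      have h1 : ∀ f ∈ F1, ψ f ∈ Finset.Ico (ψ e + 1) B := by
        intro f hf
        obtain ⟨-, hfa, hflt⟩ := (Finset.mem_filter.1 hf).2
        refine Finset.mem_Ico.2 ⟨hflt, ?_⟩
        by_cases h : v ∈ G.ends e
        · have hva : v = a e := hvEv e ((hmemEv e).2 h)
          have : v ∈ G.ends f := (hmem f v).2 (Or.inl (hva.trans hfa.symm))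
          rw [hB, if_pos h]
          exact hψv f ((hmemEv f).2 this)
        · rw [hB, if_neg h]; exact hψk f
      have h2 : Set.InjOn ψ ↑F1 := by
        intro f hf g hg h
        by_contra hne
        obtain ⟨-, hfa, -⟩ := (Finset.mem_filter.1 hf).2
        obtain ⟨-, hga, -⟩ := (Finset.mem_filter.1 hg).2
        exact hproper' f g hne (Or.inl (hfa.trans hga.symm)) h
      have := Finset.card_le_card_of_injOn ψ h1 h2
      rwa [Nat.card_Ico] at this
    have hcF2 : F2.card ≤ ψ e := by
      have h1 : ∀ f ∈ F2, ψ f ∈ Finset.range (ψ e) := by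
        intro f hf
        exact Finset.mem_range.2 (Finset.mem_filter.1 hf).2.2.2
      have h2 : Set.InjOn ψ ↑F2 := by
        intro f hf g hg h
        by_contra hne
        obtain ⟨-, hfb, -⟩ := (Finset.mem_filter.1 hf).2
        obtain ⟨-, hgb, -⟩ := (Finset.mem_filter.1 hg).2
        exact hproper' f g hne (Or.inr (hfb.trans hgb.symm)) h
      have := Finset.card_le_card_of_injOn ψ h1 h2
      rwa [Finset.card_range] at this
    have := (Finset.card_le_card hsub).trans (Finset.card_union_le F1 F2)
    omega
  obtain ⟨c, hc⟩ := kernel_choosable (Multigraph.lineGraph G) D hDH hker Finset.univ A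
    (fun e he => by convert hbound e he using 3)
  refine ⟨c, fun x => (hc x (Finset.mem_univ x)).1, fun x y hadj =>
    (hc x (Finset.mem_univ x)).2 y (Finset.mem_univ y) hadj⟩
end

section
/- Let G = (V,E) be any multigraph on four vertices and let v ∈ V. Then G is f_{G,v}-edge-choosable, where f_{G,v}(e) = d_G(v) if the edge e is incident to v, and f_{G,v}(e) = χ'(G) otherwise. -/
open scoped Classical

theorem lemA {E : Type*} (H : SimpleGraph E) (Pv : E → Prop)
    (hstr : ∀ ⦃e e'⦄, e ≠ e' → ¬ H.Adj e e' → (Pv e ↔ ¬ Pv e'))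
    (h1 : ∀ ⦃e e' s⦄, e ≠ e' → ¬ H.Adj e e' → s ≠ e → ¬ H.Adj s e →
      s ≠ e' → ¬ H.Adj s e' → False)
    (h2 : ∀ ⦃e e' s s'⦄, e ≠ e' → ¬ H.Adj e e' → s ≠ e → ¬ H.Adj s e →
      s' ≠ e' → ¬ H.Adj s' e' → s ≠ s' → ¬ H.Adj s s') :
    ∀ (n : ℕ) (D : Finset E) (k : ℕ) (A : E → Finset ℕ),
      D.card ≤ n →
      (∀ e ∈ D, Pv e → (D.filter Pv).card ≤ (A e).card) →
      (∀ S : Finset E, S ⊆ D → ((S : Set E).Pairwise H.Adj) → S.card ≤ k) →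
      (∀ e ∈ D, ¬ Pv e → k ≤ (A e).card) →
      ∃ c : E → ℕ, (∀ e ∈ D, c e ∈ A e) ∧
        ∀ e ∈ D, ∀ e' ∈ D, H.Adj e e' → c e ≠ c e' := by
  intro n
  induction n with
  | zero =>
    intro D k A hDn _ _ _
    have hD : D = ∅ := Finset.card_eq_zero.mp (Nat.le_zero.mp hDn)
    subst hD
    exact ⟨fun _ => 0, by simp, by simp⟩
  | succ n IH =>
    intro D k A hDn hAv hk hA0
    by_cases hcase : ∃ e ∈ D, ∃ e' ∈ D, e ≠ e' ∧ ¬ H.Adj e e' ∧ Pv e ∧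
        (A e ∩ A e').Nonempty
    · -- Case 1: a nonadjacent pair shares a color
      obtain ⟨e, heD, e', he'D, hne, hnadj, hPve, c₀, hc₀⟩ := hcase
      have hc₀e : c₀ ∈ A e := (Finset.mem_inter.mp hc₀).1
      have hc₀e' : c₀ ∈ A e' := (Finset.mem_inter.mp hc₀).2
      have hPve' : ¬ Pv e' := (hstr hne hnadj).mp hPve
      set D' : Finset E := (D.erase e).erase e' with hD'
      have hD'sub : D' ⊆ D := (Finset.erase_subset _ _).trans (Finset.erase_subset _ _)
      have hmemD' : ∀ x, x ∈ D' ↔ (x ∈ D ∧ x ≠ e ∧ x ≠ e') := by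
        intro x
        simp [hD', Finset.mem_erase]
        tauto
      have he'mem : e' ∈ D.erase e := Finset.mem_erase.mpr ⟨hne.symm, he'D⟩
      have hD'card : D'.card = D.card - 2 := by
        rw [hD', Finset.card_erase_of_mem he'mem, Finset.card_erase_of_mem heD,
          Nat.sub_sub]
      have hD2 : 2 ≤ D.card := by
        have := Finset.card_le_card (show {e, e'} ⊆ D by
          intro x hx; rcases Finset.mem_insert.mp hx with h | h
          · exact h ▸ heD
          · exact (Finset.mem_singleton.mp h) ▸ he'D)
        rwa [Finset.card_insert_of_notMem (by simpa using hne),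
          Finset.card_singleton] at this
      have hk1 : 1 ≤ k := by
        have := hk {e} (by simpa using heD)
          (by intro a ha b hb hab; simp only [Finset.coe_singleton,
                Set.mem_singleton_iff] at ha hb; subst ha; subst hb; exact absurd rfl hab)
        simpa using this
      set A' : E → Finset ℕ := fun x => (A x).erase c₀ with hA'
      -- list size bound for Pv edges
      have hfilter_sub : D'.filter Pv ⊆ (D.filter Pv).erase e := by
        intro x hx
        rcases Finset.mem_filter.mp hx with ⟨hxD', hPx⟩
        rcases (hmemD' x).mp hxD' with ⟨hxD, hxe, _⟩
        exact Finset.mem_erase.mpr ⟨hxe, Finset.mem_filter.mpr ⟨hxD, hPx⟩⟩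
      have hefil : e ∈ D.filter Pv := Finset.mem_filter.mpr ⟨heD, hPve⟩
      have hfilter_card : (D'.filter Pv).card + 1 ≤ (D.filter Pv).card := by
        have h1' := Finset.card_le_card hfilter_sub
        have h2' := Finset.card_erase_of_mem hefil
        have h3' : 1 ≤ (D.filter Pv).card := Finset.card_pos.mpr ⟨e, hefil⟩
        omega
      have hAv' : ∀ x ∈ D', Pv x → (D'.filter Pv).card ≤ (A' x).card := by
        intro x hxD' hPx
        have hb := hAv x (hD'sub hxD') hPx
        have he1 : (A x).card - 1 ≤ (A' x).card := Finset.pred_card_le_card_erase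
        omega
      -- clique bound k - 1
      have hk' : ∀ S : Finset E, S ⊆ D' → ((S : Set E).Pairwise H.Adj) →
          S.card ≤ k - 1 := by
        intro S hSD' hSp
        have heS : e ∉ S := fun h => ((hmemD' e).mp (hSD' h)).2.1 rfl
        have he'S : e' ∉ S := fun h => ((hmemD' e').mp (hSD' h)).2.2 rfl
        have key : S.card + 1 ≤ k := by
          by_cases hse : ∃ s ∈ S, ¬ H.Adj s e
          · -- insert e' S is a clique
            obtain ⟨s₀, hs₀S, hs₀⟩ := hse
            have hs₀e : s₀ ≠ e := fun h => heS (h ▸ hs₀S)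
            have hadj : ∀ s ∈ S, H.Adj s e' := by
              intro s hsS
              by_contra hnad
              have hse' : s ≠ e' := fun h => he'S (h ▸ hsS)
              rcases eq_or_ne s₀ s with rfl | hne'
              · exact h1 hne hnadj hs₀e hs₀ hse' hnad
              · exact h2 hne hnadj hs₀e hs₀ hse' hnad hne'
                  (hSp hs₀S hsS hne' )
            have hclq : ((insert e' S : Finset E) : Set E).Pairwise H.Adj := by
              intro a ha b hb hab
              simp only [Finset.coe_insert, Set.mem_insert_iff, Finset.mem_coe] at ha hb
              rcases ha with rfl | ha
              · rcases hb with rfl | hb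
                · exact absurd rfl hab
                · exact (hadj b hb).symm
              · rcases hb with rfl | hb
                · exact hadj a ha
                · exact hSp ha hb hab
            have := hk (insert e' S)
              (by intro x hx; rcases Finset.mem_insert.mp hx with rfl | hx
                  · exact he'D
                  · exact hD'sub (hSD' hx)) hclq
            rwa [Finset.card_insert_of_notMem he'S] at this
          · push_neg at hse
            have hclq : ((insert e S : Finset E) : Set E).Pairwise H.Adj := by
              intro a ha b hb hab
              simp only [Finset.coe_insert, Set.mem_insert_iff, Finset.mem_coe] at ha hb
              rcases ha with rfl | ha
              · rcases hb with rfl | hb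
                · exact absurd rfl hab
                · exact (hse b hb).symm
              · rcases hb with rfl | hb
                · exact hse a ha
                · exact hSp ha hb hab
            have := hk (insert e S)
              (by intro x hx; rcases Finset.mem_insert.mp hx with rfl | hx
                  · exact heD
                  · exact hD'sub (hSD' hx)) hclq
            rwa [Finset.card_insert_of_notMem heS] at this
        omega
      have hA0' : ∀ x ∈ D', ¬ Pv x → k - 1 ≤ (A' x).card := by
        intro x hxD' hPx
        have hb := hA0 x (hD'sub hxD') hPx
        have he1 : (A x).card - 1 ≤ (A' x).card := Finset.pred_card_le_card_erase
        omega
      obtain ⟨c, hcmem, hcprop⟩ := IH D' (k - 1) A' (by omega) hAv' hk' hA0'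
      refine ⟨fun x => if x = e ∨ x = e' then c₀ else c x, ?_, ?_⟩
      · intro x hxD
        by_cases hx : x = e ∨ x = e'
        · rcases hx with rfl | rfl
          · simpa using hc₀e
          · simpa using hc₀e'
        · simp only [if_neg hx]
          push_neg at hx
          have hxD' : x ∈ D' := (hmemD' x).mpr ⟨hxD, hx.1, hx.2⟩
          exact Finset.erase_subset _ _ (hcmem x hxD')
      · intro x hx y hy hadj
        by_cases hxe : x = e ∨ x = e' <;> by_cases hye : y = e ∨ y = e'
        · -- both special: contradiction
          exfalso
          rcases hxe with rfl | rfl <;> rcases hye with rfl | rfl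
          · exact H.irrefl hadj
          · exact hnadj hadj
          · exact hnadj hadj.symm
          · exact H.irrefl hadj
        · simp only [if_pos hxe, if_neg hye]
          push_neg at hye
          have hyD' : y ∈ D' := (hmemD' y).mpr ⟨hy, hye.1, hye.2⟩
          exact fun h => (Finset.ne_of_mem_erase (hcmem y hyD')) h.symm
        · simp only [if_neg hxe, if_pos hye]
          push_neg at hxe
          have hxD' : x ∈ D' := (hmemD' x).mpr ⟨hx, hxe.1, hxe.2⟩
          exact Finset.ne_of_mem_erase (hcmem x hxD')
        · simp only [if_neg hxe, if_neg hye]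
          push_neg at hxe; push_neg at hye
          exact hcprop x ((hmemD' x).mpr ⟨hx, hxe.1, hxe.2⟩)
            y ((hmemD' y).mpr ⟨hy, hye.1, hye.2⟩) hadj
    · -- Case 2: all nonadjacent pairs have disjoint lists; use Hall
      push_neg at hcase
      have hdisj : ∀ a ∈ D, ∀ b ∈ D, a ≠ b → ¬ H.Adj a b → Pv a →
          A a ∩ A b = ∅ := by
        intro a ha b hb hab hnadj hPa
        exact hcase a ha b hb hab hnadj hPa
      set t : {x // x ∈ D} → Finset ℕ := fun x => A x.1 with ht
      have hall : ∀ s : Finset {x // x ∈ D}, s.card ≤ (s.biUnion t).card := by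
        intro s
        rcases s.eq_empty_or_nonempty with rfl | ⟨a₀, ha₀⟩
        · simp
        set S : Finset E := s.image Subtype.val with hS
        have hScard : S.card = s.card :=
          Finset.card_image_of_injective _ Subtype.val_injective
        have hSD : S ⊆ D := by
          intro x hx
          obtain ⟨y, _, rfl⟩ := Finset.mem_image.mp hx
          exact y.2
        have hsubB : ∀ a ∈ S, A a ⊆ s.biUnion t := by
          intro a haS
          obtain ⟨y, hy, rfl⟩ := Finset.mem_image.mp haS
          exact Finset.subset_biUnion_of_mem t hy
        by_cases hpair : ∃ a ∈ S, ∃ b ∈ S, a ≠ b ∧ ¬ H.Adj a b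
        · obtain ⟨a, haS, b, hbS, hab, hnadj⟩ := hpair
          -- WLOG Pv a
          have main : ∀ a ∈ S, ∀ b ∈ S, a ≠ b → ¬ H.Adj a b → Pv a →
              s.card ≤ (s.biUnion t).card := by
            intro a haS b hbS hab hnadj hPa
            have hPb : ¬ Pv b := (hstr hab hnadj).mp hPa
            have hdAB : A a ∩ A b = ∅ := hdisj a (hSD haS) b (hSD hbS) hab hnadj hPa
            have hcardU : (A a).card + (A b).card ≤ (s.biUnion t).card := by
              have hsub : A a ∪ A b ⊆ s.biUnion t :=
                Finset.union_subset (hsubB a haS) (hsubB b hbS)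
              have := Finset.card_le_card hsub
              rwa [Finset.card_union_of_disjoint
                (Finset.disjoint_iff_inter_eq_empty.mpr hdAB)] at this
            -- S.card ≤ filter Pv card + k
            have hfil : (S.filter Pv).card ≤ (A a).card := by
              refine le_trans (Finset.card_le_card ?_) (hAv a (hSD haS) hPa)
              exact Finset.filter_subset_filter _ hSD
            have hnfil : (S.filter (fun x => ¬ Pv x)).card ≤ (A b).card := by
              refine le_trans (hk _ ((Finset.filter_subset _ _).trans hSD) ?_)
                (hA0 b (hSD hbS) hPb)
              intro x hx y hy hxy
              simp only [Finset.coe_filter, Set.mem_setOf_eq] at hx hy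
              by_contra hnad
              rcases (hstr hxy hnad).mpr hy.2 with h
              exact hx.2 h
            have hsplit := Finset.card_filter_add_card_filter_not
              (s := S) (p := Pv)
            omega
          by_cases hPa : Pv a
          · exact main a haS b hbS hab hnadj hPa
          · have hPb : Pv b := by
              by_contra hPb
              exact hPa ((hstr hab hnadj).mpr hPb)
            exact main b hbS a haS hab.symm (fun h => hnadj h.symm) hPb
        · push_neg at hpair
          have hclq : ((S : Set E)).Pairwise H.Adj := by
            intro x hx y hy hxy
            exact hpair x hx y hy hxy
          have hSk : S.card ≤ k := hk S hSD hclq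
          have ha₀S : (a₀ : E) ∈ S := Finset.mem_image_of_mem _ ha₀
          by_cases hex : ∃ b ∈ S, ¬ Pv b
          · obtain ⟨b, hbS, hPb⟩ := hex
            calc s.card = S.card := hScard.symm
              _ ≤ k := hSk
              _ ≤ (A b).card := hA0 b (hSD hbS) hPb
              _ ≤ (s.biUnion t).card := Finset.card_le_card (hsubB b hbS)
          · push_neg at hex
            have hSfil : S ⊆ D.filter Pv := by
              intro x hx
              exact Finset.mem_filter.mpr ⟨hSD hx, hex x hx⟩
            calc s.card = S.card := hScard.symm
              _ ≤ (D.filter Pv).card := Finset.card_le_card hSfil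
              _ ≤ (A (a₀ : E)).card := hAv _ (hSD ha₀S) (hex _ ha₀S)
              _ ≤ (s.biUnion t).card := Finset.card_le_card (hsubB _ ha₀S)
      obtain ⟨f, hfinj, hfmem⟩ :=
        (Finset.all_card_le_biUnion_card_iff_exists_injective t).mp hall
      refine ⟨fun x => if h : x ∈ D then f ⟨x, h⟩ else 0, ?_, ?_⟩
      · intro x hx
        simp only [dif_pos hx]
        exact hfmem ⟨x, hx⟩
      · intro x hx y hy hadj
        simp only [dif_pos hx, dif_pos hy]
        intro h
        have := hfinj h
        have : x = y := congrArg Subtype.val this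
        exact H.ne_of_adj hadj this

/-- For a multigraph `G` on four vertices and any vertex `v`, `G` is
`f_{G,v}`-edge-choosable, where `f_{G,v}(e) = d_G(v)` for edges incident to `v`
and `f_{G,v}(e) = χ'(G)` otherwise. -/
theorem stmt_4 {V E : Type*} [Fintype V] [Fintype E] (G : Multigraph V E)
    (hcard : Fintype.card V = 4) (v : V) :
    Choosable (Multigraph.lineGraph G)
      (fun e => if v ∈ G.ends e then G.degree v else chromNum (Multigraph.lineGraph G)) := by
  classical
  intro A hA
  set H := Multigraph.lineGraph G with hH
  set Pv : E → Prop := fun e => v ∈ G.ends e with hPvdef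
  have hrep0 : ∀ z : Sym2 V, ∃ a b : V, z = s(a, b) :=
    Sym2.ind fun a b => ⟨a, b, rfl⟩
  have hrep : ∀ e : E, ∃ a b : V, a ≠ b ∧ G.ends e = s(a, b) := by
    intro e
    obtain ⟨a, b, h⟩ := hrep0 (G.ends e)
    exact ⟨a, b, fun hab => G.not_isDiag e
      (by rw [h]; exact Sym2.mk_isDiag_iff.mpr hab), h⟩
  -- nonadjacent distinct edges have disjoint ends and cover V
  have hnoshare : ∀ ⦃e e' : E⦄, e ≠ e' → ¬ H.Adj e e' →
      ∀ x : V, x ∈ G.ends e → x ∉ G.ends e' := by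
    intro e e' hne hnadj x hx hx'
    exact hnadj ⟨hne, x, hx, hx'⟩
  have hcover : ∀ ⦃e e' : E⦄, e ≠ e' → ¬ H.Adj e e' →
      ∀ z : V, z ∈ G.ends e ∨ z ∈ G.ends e' := by
    intro e e' hne hnadj z
    obtain ⟨a, b, hab, he⟩ := hrep e
    obtain ⟨c, d, hcd, he'⟩ := hrep e'
    have hma : a ∈ G.ends e := by rw [he]; exact Sym2.mem_iff.mpr (Or.inl rfl)
    have hmb : b ∈ G.ends e := by rw [he]; exact Sym2.mem_iff.mpr (Or.inr rfl)
    have hmc : c ∈ G.ends e' := by rw [he']; exact Sym2.mem_iff.mpr (Or.inl rfl)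
    have hmd : d ∈ G.ends e' := by rw [he']; exact Sym2.mem_iff.mpr (Or.inr rfl)
    have hac : a ≠ c := fun h => hnoshare hne hnadj a hma (h ▸ hmc)
    have had : a ≠ d := fun h => hnoshare hne hnadj a hma (h ▸ hmd)
    have hbc : b ≠ c := fun h => hnoshare hne hnadj b hmb (h ▸ hmc)
    have hbd : b ≠ d := fun h => hnoshare hne hnadj b hmb (h ▸ hmd)
    have hF : ({a, b, c, d} : Finset V) = Finset.univ := by
      apply Finset.eq_univ_of_card
      rw [hcard]
      rw [Finset.card_insert_of_notMem (by simp [hab, hac, had]),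
        Finset.card_insert_of_notMem (by simp [hbc, hbd]),
        Finset.card_insert_of_notMem (by simp [hcd]), Finset.card_singleton]
    have hz : z ∈ ({a, b, c, d} : Finset V) := hF ▸ Finset.mem_univ z
    simp only [Finset.mem_insert, Finset.mem_singleton] at hz
    rcases hz with rfl | rfl | rfl | rfl
    · exact Or.inl hma
    · exact Or.inl hmb
    · exact Or.inr hmc
    · exact Or.inr hmd
  have hstr : ∀ ⦃e e' : E⦄, e ≠ e' → ¬ H.Adj e e' → (Pv e ↔ ¬ Pv e') := by
    intro e e' hne hnadj
    constructor
    · intro h h'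
      exact hnoshare hne hnadj v h h'
    · intro h
      rcases hcover hne hnadj v with h' | h'
      · exact h'
      · exact absurd h' h
  have h1 : ∀ ⦃e e' s : E⦄, e ≠ e' → ¬ H.Adj e e' → s ≠ e → ¬ H.Adj s e →
      s ≠ e' → ¬ H.Adj s e' → False := by
    intro e e' s hne hnadj hse hnse hse' hnse'
    obtain ⟨a, b, hab, hs⟩ := hrep s
    have hma : a ∈ G.ends s := by rw [hs]; exact Sym2.mem_iff.mpr (Or.inl rfl)
    rcases hcover hne hnadj a with h | h
    · exact hnoshare hse hnse a hma h
    · exact hnoshare hse' hnse' a hma h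
  have h2 : ∀ ⦃e e' s s' : E⦄, e ≠ e' → ¬ H.Adj e e' → s ≠ e → ¬ H.Adj s e →
      s' ≠ e' → ¬ H.Adj s' e' → s ≠ s' → ¬ H.Adj s s' := by
    intro e e' s s' hne hnadj hse hnse hse' hnse' hss
    rintro ⟨-, x, hxs, hxs'⟩
    rcases hcover hne hnadj x with h | h
    · exact hnoshare hse hnse x hxs h
    · exact hnoshare hse' hnse' x hxs' h
  -- clique bound
  have hchrom : ∀ S : Finset E, ((S : Set E)).Pairwise H.Adj →
      S.card ≤ chromNum H := by
    intro S hSp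
    have hne : {n | H.Colorable n}.Nonempty := ⟨Fintype.card E, H.colorable_of_fintype⟩
    have hmem : H.Colorable (chromNum H) := Nat.sInf_mem hne
    obtain ⟨C⟩ := hmem
    have hinj : Set.InjOn (fun e => C e) (S : Set E) := by
      intro a ha b hb hCab
      by_contra hne'
      exact C.valid (hSp ha hb hne') hCab
    calc S.card ≤ (Finset.univ : Finset (Fin (chromNum H))).card :=
          Finset.card_le_card_of_injOn (fun e => C e) (fun _ _ => Finset.mem_univ _) hinj
      _ = chromNum H := by simp
  -- degree = filter card
  have hdeg : ∀ (s : Finset E), (∀ x, x ∈ s ↔ v ∈ G.ends x) → G.degree v = s.card := by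
    intro s hs
    rw [Multigraph.degree, Set.ncard_eq_toFinset_card']
    congr 1
    ext e
    simp [hs e]
  obtain ⟨c, hcmem, hcprop⟩ := lemA H Pv hstr h1 h2 (Fintype.card E) Finset.univ
    (chromNum H) A le_rfl
    (by
      intro e _ hPe
      rw [hA e]
      simp only [hPvdef] at hPe
      simp only [if_pos hPe]
      exact (hdeg _ (fun x => by simp [Finset.mem_filter, hPvdef])).ge)
    (fun S _ hSp => hchrom S hSp)
    (by
      intro e _ hPe
      rw [hA e]
      simp only [hPvdef] at hPe
      simp only [if_neg hPe]
      exact le_rfl)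
  exact ⟨c, fun x => hcmem x (Finset.mem_univ x),
    fun x y hadj => hcprop x (Finset.mem_univ x) y (Finset.mem_univ y) hadj⟩
end

section
/- Let D be a finite digraph (no loops, at most one arc in each direction between any two vertices) in which every induced subdigraph has a kernel, and let f : V → ℕ satisfy f(v) > d_out(v) for every vertex v, where d_out(v) is the outdegree of v. Then the underlying undirected graph of D is f-choosable. -/
open scoped Classical

/-- A kernel of the subdigraph of `D` induced on `S`: an independent subset `K` of `S`
such that every vertex of `S` outside `K` sends an arc to some vertex of `K`. -/
def HasKernelOn {α : Type*} (D : α → α → Prop) (S : Set α) : Prop :=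
  ∃ K : Set α, K ⊆ S ∧ (∀ u ∈ K, ∀ w ∈ K, u ≠ w → ¬ D u w) ∧
    ∀ x ∈ S, x ∉ K → ∃ u ∈ K, D x u

/-- The underlying undirected graph of a digraph: an edge whenever there is an arc
in at least one direction. -/
def underlyingGraph {α : Type*} (D : α → α → Prop) : SimpleGraph α where
  Adj u w := u ≠ w ∧ (D u w ∨ D w u)
  symm := by
    constructor
    rintro u w ⟨hne, h⟩
    exact ⟨hne.symm, h.symm⟩
  loopless := ⟨fun u h => h.1 rfl⟩

/-- `D` is an orientation of the simple graph `H`: a loopless digraph whose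
underlying graph is `H` (pairs of opposite arcs give a single edge). -/
def IsOrientation {α : Type*} (H : SimpleGraph α) (D : α → α → Prop) : Prop :=
  (∀ x, ¬ D x x) ∧ ∀ x y, (D x y ∨ D y x) ↔ H.Adj x y

/-- A digraph is normal if every clique (set of vertices pairwise joined by at least
one arc) has a kernel. -/
def IsNormal {α : Type*} (D : α → α → Prop) : Prop :=
  ∀ C : Set α, (∀ x ∈ C, ∀ y ∈ C, x ≠ y → D x y ∨ D y x) → HasKernelOn D C

/-- A simple graph is solvable if every normal orientation of it has a kernel. -/
def Solvable {α : Type*} (H : SimpleGraph α) : Prop :=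
  ∀ D : α → α → Prop, IsOrientation H D → IsNormal D → HasKernelOn D Set.univ


private lemma galvin_aux {α : Type*} [Fintype α] (D : α → α → Prop)
    (hker : ∀ S : Set α, HasKernelOn D S) :
    ∀ n : ℕ, ∀ T : Finset α, T.card ≤ n → ∀ A : α → Finset ℕ,
      (∀ x ∈ T, {y | y ∈ T ∧ D x y}.ncard < (A x).card) →
      ∃ c : α → ℕ, (∀ x ∈ T, c x ∈ A x) ∧
        ∀ x ∈ T, ∀ y ∈ T, x ≠ y → (D x y ∨ D y x) → c x ≠ c y := by
  intro n
  induction n with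
  | zero =>
    intro T hT A _
    refine ⟨fun _ => 0, ?_, ?_⟩ <;>
    · intro x hx
      simp [Finset.card_eq_zero.mp (Nat.le_zero.mp hT)] at hx
  | succ n ih =>
    intro T hT A hA
    rcases Finset.eq_empty_or_nonempty T with rfl | ⟨x0, hx0⟩
    · exact ⟨fun _ => 0, by simp, by simp⟩
    -- pick a color γ in A x0
    have hA0 : (A x0).Nonempty := by
      have := hA x0 hx0
      exact Finset.card_pos.mp (by omega)
    obtain ⟨γ, hγ⟩ := hA0
    set S : Set α := {x | x ∈ T ∧ γ ∈ A x} with hS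
    obtain ⟨K, hKS, hKind, hKdom⟩ := hker S
    have hx0S : x0 ∈ S := ⟨hx0, hγ⟩
    have hKne : ∃ u, u ∈ K := by
      by_cases h : x0 ∈ K
      · exact ⟨x0, h⟩
      · obtain ⟨u, hu, _⟩ := hKdom x0 hx0S h
        exact ⟨u, hu⟩
    obtain ⟨u0, hu0⟩ := hKne
    set T' : Finset α := T.filter (fun x => x ∉ K) with hT'
    have hT'sub : T' ⊆ T := Finset.filter_subset _ _
    have hu0T : u0 ∈ T := (hKS hu0).1
    have hu0T' : u0 ∉ T' := by simp [hT', hu0]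
    have hcard : T'.card ≤ n := by
      have : T'.card < T.card :=
        Finset.card_lt_card ⟨hT'sub, fun h => hu0T' (h hu0T)⟩
      omega
    set A' : α → Finset ℕ := fun x => if γ ∈ A x then (A x).erase γ else A x with hA'
    have hbound : ∀ x ∈ T', {y | y ∈ T' ∧ D x y}.ncard < (A' x).card := by
      intro x hx
      have hxT : x ∈ T := hT'sub hx
      have hxK : x ∉ K := (Finset.mem_filter.mp hx).2
      by_cases hc : γ ∈ A x
      · obtain ⟨u, huK, hDxu⟩ := hKdom x ⟨hxT, hc⟩ hxK
        have husub : {y | y ∈ T' ∧ D x y} ⊆ {y | y ∈ T ∧ D x y} \ {u} := by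
          rintro y ⟨hyT', hDxy⟩
          refine ⟨⟨hT'sub hyT', hDxy⟩, ?_⟩
          intro h
          exact (Finset.mem_filter.mp hyT').2 (h ▸ huK)
        have huin : u ∈ {y | y ∈ T ∧ D x y} := ⟨(hKS huK).1, hDxu⟩
        have hfin : ({y | y ∈ T ∧ D x y} : Set α).Finite := Set.toFinite _
        have h1 : {y | y ∈ T' ∧ D x y}.ncard ≤ ({y | y ∈ T ∧ D x y} \ {u}).ncard :=
          Set.ncard_le_ncard husub (hfin.diff)
        have h2 : ({y | y ∈ T ∧ D x y} \ {u}).ncard = {y | y ∈ T ∧ D x y}.ncard - 1 :=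
          Set.ncard_diff_singleton_of_mem huin
        have h3 : 1 ≤ {y | y ∈ T ∧ D x y}.ncard :=
          (Set.ncard_pos hfin).mpr ⟨u, huin⟩
        have h4 := hA x hxT
        have h5 : (A' x).card = (A x).card - 1 := by
          simp [hA', hc, Finset.card_erase_of_mem hc]
        omega
      · have h1 : {y | y ∈ T' ∧ D x y}.ncard ≤ {y | y ∈ T ∧ D x y}.ncard :=
          Set.ncard_le_ncard (fun y ⟨h, h2⟩ => ⟨hT'sub h, h2⟩) (Set.toFinite _)
        have h4 := hA x hxT
        have h5 : (A' x).card = (A x).card := by simp [hA', hc]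
        omega
    obtain ⟨c', hc'mem, hc'prop⟩ := ih T' hcard A' hbound
    refine ⟨fun x => if x ∈ K then γ else c' x, ?_, ?_⟩
    · intro x hx
      by_cases hk : x ∈ K
      · simpa [hk] using (hKS hk).2
      · have hx' : x ∈ T' := Finset.mem_filter.mpr ⟨hx, hk⟩
        have := hc'mem x hx'
        by_cases hc : γ ∈ A x
        · simpa [hk] using Finset.erase_subset _ _ (by simpa [hA', hc] using this)
        · simpa [hk, hA', hc] using this
    · intro x hx y hy hne harc
      have notγ : ∀ z ∈ T, z ∉ K → c' z ≠ γ := by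
        intro z hz hzK
        have hz' : z ∈ T' := Finset.mem_filter.mpr ⟨hz, hzK⟩
        have := hc'mem z hz'
        by_cases hc : γ ∈ A z
        · simp only [hA', hc, if_pos] at this
          exact (Finset.mem_erase.mp this).1
        · intro h
          rw [h] at this
          simp [hA', hc] at this
      by_cases hxK : x ∈ K <;> by_cases hyK : y ∈ K
      · exact absurd (harc.elim id (fun h => absurd h (hKind y hyK x hxK hne.symm)))
          (hKind x hxK y hyK hne)
      · simpa [hxK, hyK] using (notγ y hy hyK).symm
      · simpa [hxK, hyK] using notγ x hx hxK
      · have hx' : x ∈ T' := Finset.mem_filter.mpr ⟨hx, hxK⟩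
        have hy' : y ∈ T' := Finset.mem_filter.mpr ⟨hy, hyK⟩
        simpa [hxK, hyK] using hc'prop x hx' y hy' hne harc

/-- **Galvin's kernel lemma.** If every induced subdigraph of a finite loopless
digraph `D` has a kernel and `f` exceeds every outdegree, then the underlying
graph of `D` is `f`-choosable. -/
theorem stmt_6 {α : Type*} [Fintype α] (D : α → α → Prop) (hirr : ∀ x, ¬ D x x)
    (hker : ∀ S : Set α, HasKernelOn D S) (f : α → ℕ)
    (hf : ∀ x, {y | D x y}.ncard < f x) :
    Choosable (underlyingGraph D) f := by
  intro A hA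
  obtain ⟨c, hmem, hprop⟩ := galvin_aux D hker (Finset.univ.card) Finset.univ le_rfl A
    (by
      intro x _
      have : {y | y ∈ (Finset.univ : Finset α) ∧ D x y} = {y | D x y} := by
        ext y; simp
      rw [this, hA x]
      exact hf x)
  refine ⟨c, fun x => hmem x (Finset.mem_univ x), ?_⟩
  intro x y hadj
  exact hprop x (Finset.mem_univ x) y (Finset.mem_univ y) hadj.1 hadj.2
end

section
/- Every induced subgraph of a solvable graph is solvable. -/
open scoped Classical

/-- Every induced subgraph of a solvable graph is solvable. -/
theorem stmt_7 {α : Type*} [Fintype α] (H : SimpleGraph α) (hs : Solvable H)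
    (s : Set α) : Solvable (H.induce s) := by
  intro D hD hN
  -- Extend D to an orientation D' of H
  set D' : α → α → Prop := fun x y =>
    if hx : x ∈ s then (if hy : y ∈ s then D ⟨x, hx⟩ ⟨y, hy⟩ else False)
    else H.Adj x y with hD'def
  have hDs : ∀ (x y : α) (hx : x ∈ s) (hy : y ∈ s), D' x y ↔ D ⟨x, hx⟩ ⟨y, hy⟩ := by
    intro x y hx hy; simp [hD'def, hx, hy]
  have hDout : ∀ (x y : α), x ∉ s → (D' x y ↔ H.Adj x y) := by
    intro x y hx; simp [hD'def, hx]
  have hDmid : ∀ (x y : α), x ∈ s → y ∉ s → ¬ D' x y := by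
    intro x y hx hy; simp [hD'def, hx, hy]
  -- D' is an orientation of H
  have hOr : IsOrientation H D' := by
    constructor
    · intro x
      by_cases hx : x ∈ s
      · rw [hDs x x hx hx]; exact hD.1 _
      · rw [hDout x x hx]; exact H.loopless.irrefl x
    · intro x y
      by_cases hx : x ∈ s <;> by_cases hy : y ∈ s
      · rw [hDs x y hx hy, hDs y x hy hx]
        exact (hD.2 ⟨x, hx⟩ ⟨y, hy⟩).trans Iff.rfl
      · rw [hDout y x hy]
        constructor
        · rintro (h | h)
          · exact absurd h (hDmid x y hx hy)
          · exact h.symm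
        · intro h; exact Or.inr h.symm
      · rw [hDout x y hx]
        constructor
        · rintro (h | h)
          · exact h
          · exact absurd h (hDmid y x hy hx)
        · exact Or.inl
      · rw [hDout x y hx, hDout y x hy]
        exact ⟨fun h => h.elim id (fun h => h.symm), Or.inl⟩
  -- D' is normal
  have hNor : IsNormal D' := by
    intro C hC
    by_cases hCs : ∃ x ∈ C, x ∈ s
    · -- the part of C inside s is a D-clique
      set C₁ : Set ↥s := {a : ↥s | (a : α) ∈ C} with hC₁def
      have hC₁clique : ∀ a ∈ C₁, ∀ b ∈ C₁, a ≠ b → D a b ∨ D b a := by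
        intro a ha b hb hab
        have hne : (a : α) ≠ (b : α) := fun h => hab (Subtype.ext h)
        rcases hC a ha b hb hne with h | h
        · exact Or.inl ((hDs a b a.2 b.2).mp h)
        · exact Or.inr ((hDs b a b.2 a.2).mp h)
      obtain ⟨K₁, hK₁C, hK₁ind, hK₁dom⟩ := hN C₁ hC₁clique
      -- K₁ nonempty
      obtain ⟨x₀, hx₀C, hx₀s⟩ := hCs
      have hC₁ne : (⟨x₀, hx₀s⟩ : ↥s) ∈ C₁ := hx₀C
      have hK₁ne : K₁.Nonempty := by
        by_contra h
        rw [Set.not_nonempty_iff_eq_empty] at h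
        obtain ⟨u, hu, -⟩ := hK₁dom _ hC₁ne (by simp [h])
        simp [h] at hu
      refine ⟨Subtype.val '' K₁, ?_, ?_, ?_⟩
      · rintro _ ⟨a, ha, rfl⟩; exact hK₁C ha
      · rintro _ ⟨a, ha, rfl⟩ _ ⟨b, hb, rfl⟩ hab hDab
        exact hK₁ind a ha b hb (fun h => hab (congrArg _ h))
          ((hDs a b a.2 b.2).mp hDab)
      · intro x hx hxK
        by_cases hxs : x ∈ s
        · have hxC₁ : (⟨x, hxs⟩ : ↥s) ∈ C₁ := hx
          have hxK₁ : (⟨x, hxs⟩ : ↥s) ∉ K₁ := fun h => hxK ⟨_, h, rfl⟩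
          obtain ⟨u, hu, hDu⟩ := hK₁dom _ hxC₁ hxK₁
          exact ⟨u, ⟨u, hu, rfl⟩, (hDs x u hxs u.2).mpr hDu⟩
        · obtain ⟨u, hu⟩ := hK₁ne
          have huC : (u : α) ∈ C := hK₁C hu
          have hne : x ≠ (u : α) := fun h => hxs (h ▸ u.2)
          rcases hC x hx u huC hne with h | h
          · exact ⟨u, ⟨u, hu, rfl⟩, h⟩
          · exact absurd h (hDmid u x u.2 hxs)
    · -- no vertex of C is in s
      push_neg at hCs
      rcases Set.eq_empty_or_nonempty C with rfl | ⟨z, hz⟩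
      · exact ⟨∅, Set.empty_subset _, by simp, by simp⟩
      · refine ⟨{z}, by simpa using hz, ?_, ?_⟩
        · rintro u rfl w rfl h; exact absurd rfl h
        · intro x hx hxz
          have hne : x ≠ z := by simpa using hxz
          have hxs : x ∉ s := hCs x hx
          rcases hC x hx z hz hne with h | h
          · exact ⟨z, rfl, h⟩
          · refine ⟨z, rfl, ?_⟩
            rw [hDout x z hxs]
            rw [hDout z x (hCs z hz)] at h
            exact h.symm
  -- apply solvability of H
  obtain ⟨K', hK'univ, hK'ind, hK'dom⟩ := hs D' hOr hNor
  refine ⟨{a : ↥s | (a : α) ∈ K'}, Set.subset_univ _, ?_, ?_⟩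
  · intro a ha b hb hab hDab
    exact hK'ind a ha b hb (fun h => hab (Subtype.ext h))
      ((hDs a b a.2 b.2).mpr hDab)
  · intro a _ haK
    obtain ⟨u, hu, hDu⟩ := hK'dom a (Set.mem_univ _) haK
    by_cases hus : u ∈ s
    · exact ⟨⟨u, hus⟩, hu, (hDs a u a.2 hus).mp hDu⟩
    · exact absurd hDu (hDmid a u a.2 hus)
end

section
/- Every biconnected component (block) of a line perfect multigraph is either a bipartite multigraph, a K_4 with possibly multiple edges (four vertices, each pair adjacent), or a K_{1,1,n} with possibly multiple edges (n+2 vertices v_1,…,v_n,a,b such that {v_1,…,v_n} is an independent set and {v_i,a,b} is a clique for each i = 1,…,n). -/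
open scoped Classical

namespace Multigraph

variable {V E : Type*}

/-- The simple graph on `V` induced by the edges of `G` belonging to `F`. -/
def simpleOn (G : Multigraph V E) (F : Set E) : SimpleGraph V where
  Adj u w := ∃ e ∈ F, G.ends e = s(u, w)
  symm := by
    constructor
    rintro u w ⟨e, heF, he⟩
    exact ⟨e, heF, he.trans (Sym2.eq_swap)⟩
  loopless := by
    constructor
    rintro u ⟨e, _, he⟩
    exact G.not_isDiag e (by rw [he]; exact Sym2.mk_isDiag_iff.mpr rfl)

/-- The support of an edge set `F`: all vertices incident to some edge of `F`. -/
def supp (G : Multigraph V E) (F : Set E) : Set V := {x | ∃ e ∈ F, x ∈ G.ends e}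

/-- There is an edge of `F` joining `u` and `w`. -/
def EdgeBetweenOn (G : Multigraph V E) (F : Set E) (u w : V) : Prop :=
  ∃ e ∈ F, G.ends e = s(u, w)

/-- The sub-multigraph spanned by the edge set `F` (on its support vertices)
is biconnected: connected and with no cut vertex. -/
def IsBiconnectedOn (G : Multigraph V E) (F : Set E) : Prop :=
  ((G.simpleOn F).induce (G.supp F)).Connected ∧
    ∀ x : V, ((G.simpleOn F).induce (G.supp F \ {x})).Preconnected

/-- A block (biconnected component) of `G`: a maximal edge set spanning a
biconnected sub-multigraph. -/
def IsBlock (G : Multigraph V E) (F : Set E) : Prop :=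
  G.IsBiconnectedOn F ∧ ∀ F' : Set E, F ⊆ F' → G.IsBiconnectedOn F' → F' = F

end Multigraph


/-! ### Auxiliary machinery -/

section FW
variable {V : Type*} (S : SimpleGraph V)

/-- A walk of length `n` given as a function on indices. -/
def FW (n : ℕ) (w : ℕ → V) : Prop := ∀ i < n, S.Adj (w i) (w (i+1))

variable {S}

lemma FW.concat {n1 n2 : ℕ} {w1 w2 : ℕ → V} (h1 : FW S n1 w1) (h2 : FW S n2 w2)
    (hjoin : w2 0 = w1 n1) :
    FW S (n1 + n2) (fun k => if k ≤ n1 then w1 k else w2 (k - n1)) ∧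
    (fun k => if k ≤ n1 then w1 k else w2 (k - n1)) 0 = w1 0 ∧
    (fun k => if k ≤ n1 then w1 k else w2 (k - n1)) (n1 + n2) = w2 n2 := by
  set w : ℕ → V := fun k => if k ≤ n1 then w1 k else w2 (k - n1) with hw
  have hval : ∀ k, n1 ≤ k → w k = w2 (k - n1) := by
    intro k hk
    rcases eq_or_lt_of_le hk with h | h
    · simp only [hw, ← h, le_refl, if_pos, Nat.sub_self]
      simpa using hjoin.symm
    · simp only [hw]; rw [if_neg (by omega)]
  refine ⟨?_, by simp [hw], ?_⟩
  · intro i hi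
    rcases lt_or_ge i n1 with h | h
    · have e1 : w i = w1 i := by simp [hw, le_of_lt h]
      have e2 : w (i+1) = w1 (i+1) := by simp only [hw]; rw [if_pos (by omega)]
      rw [e1, e2]; exact h1 i h
    · rw [hval i h, hval (i+1) (by omega)]
      have : i - n1 < n2 := by omega
      have := h2 (i - n1) this
      convert this using 2
      omega
  · rw [hval (n1+n2) (by omega)]
    congr 1
    omega

lemma FW.reverse {n : ℕ} {w : ℕ → V} (h : FW S n w) : FW S n (fun k => w (n - k)) := by
  intro i hi
  have := (h (n - (i+1)) (by omega)).symm
  have e : n - (i+1) + 1 = n - i := by omega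
  rw [e] at this
  exact this

/-- Minimal walks from `x` to a target set `T`, all of whose vertices satisfy `Pr`. -/
lemma min_walk {x : V} {T : Set V} {Pr : V → Prop}
    (h0 : ∃ n w, FW S n w ∧ w 0 = x ∧ w n ∈ T ∧ ∀ i ≤ n, Pr (w i)) :
    ∃ n w, FW S n w ∧ w 0 = x ∧ w n ∈ T ∧ (∀ i ≤ n, Pr (w i)) ∧
      (∀ i < n, w i ∉ T) ∧ (∀ i ≤ n, ∀ j ≤ n, w i = w j → i = j) := by
  classical
  set Q : ℕ → Prop := fun n => ∃ w, FW S n w ∧ w 0 = x ∧ w n ∈ T ∧ ∀ i ≤ n, Pr (w i) with hQ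
  have hex : ∃ n, Q n := by obtain ⟨n, w, h⟩ := h0; exact ⟨n, w, h⟩
  set n := Nat.find hex with hn
  obtain ⟨w, hFW, hx, hT, hPr⟩ := Nat.find_spec hex
  have hfirst : ∀ i < n, w i ∉ T := by
    intro i hi hiT
    exact Nat.find_min hex hi ⟨w, fun j hj => hFW j (by omega), hx, hiT,
      fun j hj => hPr j (by omega)⟩
  have hinj : ∀ i ≤ n, ∀ j ≤ n, w i = w j → i = j := by
    have key : ∀ i j, i < j → j ≤ n → w i = w j → False := by
      intro i j hij hjn heq
      have hjlt : j < n := by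
        rcases eq_or_lt_of_le hjn with h | h
        · exfalso
          have : w i ∈ T := by rw [heq, h]; exact hT
          exact hfirst i (by omega) this
        · exact h
      set w' : ℕ → V := fun k => if k ≤ i then w k else w (k + (j - i)) with hw'
      have hval : ∀ k, i ≤ k → w' k = w (k + (j - i)) := by
        intro k hk
        rcases eq_or_lt_of_le hk with h | h
        · simp only [hw', ← h, le_refl, if_pos]
          rw [show i + (j - i) = j by omega]
          exact heq
        · simp only [hw']; rw [if_neg (by omega)]
      have hFW' : FW S (n - (j - i)) w' := by
        intro k hk
        rcases lt_or_ge k i with h | h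
        · have e1 : w' k = w k := by simp [hw', le_of_lt h]
          have e2 : w' (k+1) = w (k+1) := by simp only [hw']; rw [if_pos (by omega)]
          rw [e1, e2]; exact hFW k (by omega)
        · rw [hval k h, hval (k+1) (by omega), show k + 1 + (j - i) = (k + (j-i)) + 1 by omega]
          exact hFW (k + (j-i)) (by omega)
      refine Nat.find_min hex (show n - (j - i) < n by omega) ⟨w', hFW', ?_, ?_, ?_⟩
      · simp [hw', hx]
      · rw [hval _ (by omega), show n - (j-i) + (j-i) = n by omega]; exact hT
      · intro k hk
        rcases lt_or_ge k i with h | h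
        · simpa [hw', le_of_lt h] using hPr k (by omega)
        · rw [hval k h]; exact hPr _ (by omega)
    intro i hi j hj heq
    rcases lt_trichotomy i j with h | h | h
    · exact absurd (key i j h hj heq) (by simp)
    · exact h
    · exact absurd (key j i h hi heq.symm) (by simp)
  exact ⟨n, w, hFW, hx, hT, hPr, hfirst, hinj⟩

/-- An odd closed walk yields a triangle, given that there are no odd
"function cycles" of length ≥ 5. -/
lemma odd_closed
    (hA : ∀ n (w : ℕ → V), Odd n → 5 ≤ n → FW S n w → w n = w 0 →
      (∀ i < n, ∀ j < n, w i = w j → i = j) → False) :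
    ∀ n (w : ℕ → V), FW S n w → w n = w 0 → Odd n →
      ∃ a b c : V, S.Adj a b ∧ S.Adj b c ∧ S.Adj c a := by
  intro n
  induction n using Nat.strong_induction_on with
  | _ n ih =>
    intro w hFW hcl hodd
    by_cases hinj : ∀ i < n, ∀ j < n, w i = w j → i = j
    · -- no duplicates
      rcases lt_or_ge n 5 with h5 | h5
      · interval_cases n
        · simp [Nat.odd_iff] at hodd
        · exfalso
          have := hFW 0 (by omega)
          rw [hcl] at this
          exact S.irrefl this
        · simp [Nat.odd_iff] at hodd
        · exact ⟨w 0, w 1, w 2, hFW 0 (by omega), hFW 1 (by omega),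
            by have := hFW 2 (by omega); rwa [hcl] at this⟩
        · simp [Nat.odd_iff] at hodd
      · exact absurd (hA n w hodd h5 hFW hcl hinj) (by simp)
    · -- duplicate: split
      push_neg at hinj
      obtain ⟨i, hi, j, hj, heq, hne⟩ := hinj
      -- wlog i < j
      obtain ⟨i, j, hij, hjn, heq⟩ : ∃ i j, i < j ∧ j < n ∧ w i = w j := by
        rcases lt_or_gt_of_ne hne with h | h
        · exact ⟨i, j, h, hj, heq⟩
        · exact ⟨j, i, h, hi, heq.symm⟩
      set m1 := j - i with hm1
      set m2 := n - (j - i) with hm2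
      have h1 : FW S m1 (fun k => w (i + k)) := by
        intro k hk
        have := hFW (i + k) (by omega)
        rwa [show i + k + 1 = i + (k+1) by omega] at this
      have hcl1 : (fun k => w (i + k)) m1 = (fun k => w (i + k)) 0 := by
        simp only [hm1, show i + (j - i) = j by omega, Nat.add_zero]
        exact heq.symm
      set w2 : ℕ → V := fun k => if k ≤ i then w k else w (k + (j - i)) with hw2
      have hval : ∀ k, i ≤ k → w2 k = w (k + (j - i)) := by
        intro k hk
        rcases eq_or_lt_of_le hk with h | h
        · simp only [hw2, ← h, le_refl, if_pos]
          rw [show i + (j - i) = j by omega]; exact heq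
        · simp only [hw2]; rw [if_neg (by omega)]
      have h2 : FW S m2 w2 := by
        intro k hk
        rcases lt_or_ge k i with h | h
        · have e1 : w2 k = w k := by simp [hw2, le_of_lt h]
          have e2 : w2 (k+1) = w (k+1) := by simp only [hw2]; rw [if_pos (by omega)]
          rw [e1, e2]; exact hFW k (by omega)
        · rw [hval k h, hval (k+1) (by omega), show k + 1 + (j - i) = (k + (j-i)) + 1 by omega]
          exact hFW (k + (j-i)) (by omega)
      have hcl2 : w2 m2 = w2 0 := by
        rw [hval m2 (by omega), show m2 + (j - i) = n by omega]
        simp only [hw2, if_pos (Nat.zero_le i)]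
        exact hcl
      have hsum : m1 + m2 = n := by omega
      rcases Nat.even_or_odd m1 with h | h
      · -- m1 even, so m2 odd
        have hodd2 : Odd m2 := by
          rcases Nat.even_or_odd m2 with h2 | h2
          · exfalso; have : Even n := by rw [← hsum]; exact h.add h2
            exact (Nat.not_even_iff_odd.mpr hodd) this
          · exact h2
        exact ih m2 (by omega) w2 h2 hcl2 hodd2
      · exact ih m1 (by omega) (fun k => w (i + k)) h1 hcl1 h
end FW


section Helpers
variable {V : Type*} {S : SimpleGraph V}

lemma reach_fwalk {s : Set V} {x y : ↥s} (h : (S.induce s).Reachable x y) :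
    ∃ n w, FW S n w ∧ w 0 = x.1 ∧ w n = y.1 ∧ ∀ i ≤ n, w i ∈ s := by
  obtain ⟨p⟩ := h
  refine ⟨p.length, fun i => (p.getVert (min i p.length)).1, ?_, ?_, ?_, ?_⟩
  · intro i hi
    have e1 : min i p.length = i := by omega
    have e2 : min (i+1) p.length = i+1 := by omega
    simp only [e1, e2]
    exact p.adj_getVert_succ hi
  · simp
  · simp
  · intro i _
    exact (p.getVert _).2

/-- Closing a path with a tail of extra vertices gives a cycle; contradiction
with no-odd-cycles if the total length is odd and at least 5. -/
lemma cycTail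
    (hA : ∀ n (w : ℕ → V), Odd n → 5 ≤ n → FW S n w → w n = w 0 →
      (∀ i < n, ∀ j < n, w i = w j → i = j) → False)
    {m ℓ : ℕ} {Q p : ℕ → V}
    (hFWQ : FW S m Q) (hinjQ : ∀ i ≤ m, ∀ j ≤ m, Q i = Q j → i = j)
    (hQp : ∀ i ≤ m, ∀ j < ℓ, Q i ≠ p j)
    (hpinj : ∀ i < ℓ, ∀ j < ℓ, p i = p j → i = j)
    (hchain : S.Adj (Q m) (p 0))
    (hsteps : ∀ i, i + 1 < ℓ → S.Adj (p i) (p (i+1)))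
    (hlast : S.Adj (p (ℓ - 1)) (Q 0))
    (hodd : Odd (m + ℓ + 1)) (h5 : 5 ≤ m + ℓ + 1) (hl : 1 ≤ ℓ) : False := by
  set n := m + ℓ + 1 with hn
  set w : ℕ → V := fun k => if k ≤ m then Q k else if k ≤ m + ℓ then p (k - m - 1) else Q 0
    with hw
  have hwQ : ∀ k, k ≤ m → w k = Q k := by intro k hk; simp only [hw]; rw [if_pos hk]
  have hwp : ∀ k, m < k → k ≤ m + ℓ → w k = p (k - m - 1) := by
    intro k h1 h2
    simp only [hw]; rw [if_neg (by omega), if_pos h2]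
  have hwn : w n = Q 0 := by simp only [hw]; rw [if_neg (by omega), if_neg (by omega)]
  have hFW : FW S n w := by
    intro i hi
    rcases lt_or_ge i m with h | h
    · rw [hwQ i (by omega), hwQ (i+1) (by omega)]
      exact hFWQ i h
    rcases eq_or_lt_of_le h with h' | h'
    · rw [hwQ i (by omega), hwp (i+1) (by omega) (by omega)]
      rw [show i + 1 - m - 1 = 0 by omega, ← h']
      exact hchain
    rcases lt_or_ge i (m + ℓ) with h2 | h2
    · rw [hwp i (by omega) (by omega), hwp (i+1) (by omega) (by omega)]
      rw [show i + 1 - m - 1 = (i - m - 1) + 1 by omega]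
      exact hsteps (i - m - 1) (by omega)
    · have hieq : i = m + ℓ := by omega
      rw [hwp i (by omega) (by omega), show i + 1 = n by omega, hwn, hieq]
      rw [show m + ℓ - m - 1 = ℓ - 1 by omega]
      exact hlast
  have hcl : w n = w 0 := by rw [hwn, hwQ 0 (by omega)]
  have hinj : ∀ i < n, ∀ j < n, w i = w j → i = j := by
    intro i hi j hj heq
    rcases le_or_gt i m with h1 | h1 <;> rcases le_or_gt j m with h2 | h2
    · rw [hwQ i h1, hwQ j h2] at heq
      exact hinjQ i h1 j h2 heq
    · rw [hwQ i h1, hwp j h2 (by omega)] at heq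
      exact absurd heq (hQp i h1 _ (by omega))
    · rw [hwp i h1 (by omega), hwQ j h2] at heq
      exact absurd heq.symm (hQp j h2 _ (by omega))
    · rw [hwp i h1 (by omega), hwp j h2 (by omega)] at heq
      have := hpinj _ (by omega) _ (by omega) heq
      omega
  exact hA n w hodd h5 hFW hcl hinj

/-- A five-cycle contradiction. -/
lemma fiveCyc
    (hA : ∀ n (w : ℕ → V), Odd n → 5 ≤ n → FW S n w → w n = w 0 →
      (∀ i < n, ∀ j < n, w i = w j → i = j) → False)
    {v0 v1 v2 v3 v4 : V}
    (a01 : S.Adj v0 v1) (a12 : S.Adj v1 v2) (a23 : S.Adj v2 v3) (a34 : S.Adj v3 v4)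
    (a40 : S.Adj v4 v0)
    (d02 : v0 ≠ v2) (d03 : v0 ≠ v3) (d13 : v1 ≠ v3) (d14 : v1 ≠ v4) (d24 : v2 ≠ v4) :
    False := by
  have d01 := a01.ne
  have d12 := a12.ne
  have d23 := a23.ne
  have d34 := a34.ne
  have d40 := a40.ne
  have d10 : v1 ≠ v0 := fun h => d01 h.symm
  have d21 : v2 ≠ v1 := fun h => d12 h.symm
  have d32 : v3 ≠ v2 := fun h => d23 h.symm
  have d43 : v4 ≠ v3 := fun h => d34 h.symm
  have d04 : v0 ≠ v4 := fun h => d40 h.symm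
  have d20 : v2 ≠ v0 := fun h => d02 h.symm
  have d30 : v3 ≠ v0 := fun h => d03 h.symm
  have d31 : v3 ≠ v1 := fun h => d13 h.symm
  have d41 : v4 ≠ v1 := fun h => d14 h.symm
  have d42 : v4 ≠ v2 := fun h => d24 h.symm
  refine cycTail hA (m := 1) (ℓ := 3) (Q := fun k => if k = 0 then v0 else v1)
    (p := fun k => if k = 0 then v2 else if k = 1 then v3 else v4)
    ?_ ?_ ?_ ?_ ?_ ?_ ?_ (by decide) (by omega) (by omega)
  · intro i hi
    have : i = 0 := by omega
    subst this
    simpa using a01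
  · intro i hi j hj heq
    interval_cases i <;> interval_cases j <;> simp_all
  · intro i hi j hj
    interval_cases i <;> interval_cases j <;> simp_all
  · intro i hi j hj heq
    interval_cases i <;> interval_cases j <;> simp_all
  · simpa using a12
  · intro i hi
    have : i = 0 ∨ i = 1 := by omega
    rcases this with rfl | rfl <;> simp_all
  · simpa using a40

end Helpers

lemma noOddCyc {V E : Type*} (G : Multigraph V E)
    (hperf : IsPerfect (Multigraph.lineGraph G)) (F : Set E) :
    ∀ n (w : ℕ → V), Odd n → 5 ≤ n → FW (G.simpleOn F) n w → w n = w 0 →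
      (∀ i < n, ∀ j < n, w i = w j → i = j) → False := by
  intro n w hodd h5 hFW hcl hinj
  have npos : 0 < n := by omega
  have hmod : ∀ i, i < n → (i + 1) % n = if i + 1 = n then 0 else i + 1 := by
    intro i hi
    split_ifs with h
    · simp [h]
    · exact Nat.mod_eq_of_lt (by omega)
  have m1 : ∀ j : ℕ, (j % n + 1) % n = (j + 1) % n := by
    intro j
    conv_rhs => rw [Nat.add_mod]
    rw [Nat.mod_eq_of_lt (show (1:ℕ) < n by omega)]
  have hadj0 : ∀ j : ℕ, ∃ ε, ε ∈ F ∧ G.ends ε = s(w (j % n), w ((j % n + 1) % n)) := by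
    intro j
    have hjn : j % n < n := Nat.mod_lt j npos
    rcases lt_or_ge (j % n + 1) n with h | h
    · rw [Nat.mod_eq_of_lt h]
      exact hFW (j % n) hjn
    · have hjeq : j % n + 1 = n := by omega
      rw [hjeq, Nat.mod_self]
      have hthis := hFW (j % n) hjn
      rw [hjeq, hcl] at hthis
      exact hthis
  choose e heF hends using hadj0
  have hE : ∀ i, i < n → G.ends (e i) = s(w i, w ((i + 1) % n)) := by
    intro i hi
    have h := hends i
    rw [m1 i, Nat.mod_eq_of_lt hi] at h
    exact h
  have winj : ∀ i j, i < n → j < n → w i = w j → i = j := fun i j hi hj => hinj i hi j hj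
  have hmodlt : ∀ i, (i + 1) % n < n := fun i => Nat.mod_lt _ npos
  have hmodinj : ∀ i j, i < n → j < n → (i + 1) % n = (j + 1) % n → i = j := by
    intro i j hi hj h
    rw [hmod i hi, hmod j hj] at h
    split_ifs at h <;> omega
  have hshare : ∀ i j, i < n → j < n → ∀ x, x ∈ G.ends (e i) → x ∈ G.ends (e j) →
      i = j ∨ j = (i + 1) % n ∨ i = (j + 1) % n := by
    intro i j hi hj x hx1 hx2
    rw [hE i hi, Sym2.mem_iff] at hx1
    rw [hE j hj, Sym2.mem_iff] at hx2
    rcases hx1 with h1 | h1 <;> rcases hx2 with h2 | h2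
    · exact Or.inl (winj i j hi hj (h1 ▸ h2 ▸ rfl))
    · exact Or.inr (Or.inr (winj i _ hi (hmodlt j) (h1 ▸ h2 ▸ rfl)))
    · exact Or.inr (Or.inl (winj j _ hj (hmodlt i) (h2 ▸ h1 ▸ rfl)))
    · exact Or.inl (hmodinj i j hi hj (winj _ _ (hmodlt i) (hmodlt j) (h1 ▸ h2 ▸ rfl)))
  have einj : ∀ i j, i < n → j < n → e i = e j → i = j := by
    intro i j hi hj h
    have h2 : s(w i, w ((i+1) % n)) = s(w j, w ((j+1) % n)) := by
      rw [← hE i hi, ← hE j hj, h]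
    have h2 := (Sym2.mk_eq_mk_iff (p := (w i, w ((i+1) % n))) (q := (w j, w ((j+1) % n)))).mp h2
    rcases h2 with h2 | h2
    · exact winj i j hi hj (congrArg Prod.fst h2)
    · have ha : w i = w ((j+1) % n) := congrArg Prod.fst h2
      have hb : w ((i+1) % n) = w j := congrArg Prod.snd h2
      have ea : i = (j+1) % n := winj _ _ hi (hmodlt j) ha
      have eb : (i+1) % n = j := winj _ _ (hmodlt i) hj hb
      rw [hmod i hi] at eb
      rw [hmod j hj] at ea
      split_ifs at ea eb <;> omega
  have hadjchar : ∀ i j, i < n → j < n →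
      ((Multigraph.lineGraph G).Adj (e i) (e j) ↔ (j = (i + 1) % n ∨ i = (j + 1) % n)) := by
    intro i j hi hj
    constructor
    · intro hadjx
      obtain ⟨hne, x, hx1, hx2⟩ := (show e i ≠ e j ∧ ∃ x, x ∈ G.ends (e i) ∧ x ∈ G.ends (e j) from hadjx)
      rcases hshare i j hi hj x hx1 hx2 with h | h
      · exact absurd (congrArg e h) hne
      · exact h
    · intro h
      have hne : e i ≠ e j := by
        intro hc
        have := einj i j hi hj hc
        subst this
        rcases h with h | h <;> (rw [hmod i hi] at h; split_ifs at h <;> omega)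
      rcases h with h | h
      · refine (show e i ≠ e j ∧ ∃ x, x ∈ G.ends (e i) ∧ x ∈ G.ends (e j) from ⟨hne, w j, ?_, ?_⟩)
        · rw [hE i hi, Sym2.mem_iff]; right; rw [h]
        · rw [hE j hj, Sym2.mem_iff]; left; rfl
      · refine (show e i ≠ e j ∧ ∃ x, x ∈ G.ends (e i) ∧ x ∈ G.ends (e j) from ⟨hne, w i, ?_, ?_⟩)
        · rw [hE i hi, Sym2.mem_iff]; left; rfl
        · rw [hE j hj, Sym2.mem_iff]; right; rw [h]
  set s : Set E := {ε | ∃ i, i < n ∧ e i = ε} with hs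
  -- three-colorable
  have hcol3 : ((Multigraph.lineGraph G).induce s).Colorable 3 := by
    have hidx : ∀ ε : ↥s, ∃ i, i < n ∧ e i = ε.1 := fun ε => ε.2
    choose idx hidxlt hidxe using hidx
    set g : ℕ → Fin 3 := fun i => if i = n - 1 then 2 else ⟨i % 2, by omega⟩ with hg
    have hgne : ∀ i j, i < n → j < n → j = (i + 1) % n → g i ≠ g j := by
      intro i j hi hj h heq
      rw [hmod i hi] at h
      have hval := congrArg Fin.val heq
      split_ifs at h with hcase
      · -- j = 0, i = n - 1
        subst h
        simp only [hg] at hval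
        rw [if_pos (by omega), if_neg (by omega)] at hval
        simp at hval
      · subst h
        simp only [hg] at hval
        by_cases hin : i = n - 1
        · omega
        · rw [if_neg hin] at hval
          by_cases hjn : i + 1 = n - 1
          · rw [if_pos hjn] at hval
            simp at hval
            omega
          · rw [if_neg hjn] at hval
            simp at hval
            omega
    refine ⟨SimpleGraph.Coloring.mk (fun ε => g (idx ε)) ?_⟩
    intro ε1 ε2 hadj
    have hadj' : (Multigraph.lineGraph G).Adj (e (idx ε1)) (e (idx ε2)) := by
      have hadj2 : (Multigraph.lineGraph G).Adj ε1.1 ε2.1 := hadj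
      rw [← hidxe ε1, ← hidxe ε2] at hadj2
      exact hadj2
    rw [hadjchar _ _ (hidxlt ε1) (hidxlt ε2)] at hadj'
    rcases hadj' with h | h
    · exact hgne _ _ (hidxlt ε1) (hidxlt ε2) h
    · exact (hgne _ _ (hidxlt ε2) (hidxlt ε1) h).symm
  -- not two-colorable
  have hncol2 : ¬ ((Multigraph.lineGraph G).induce s).Colorable 2 := by
    rintro ⟨C⟩
    have hmem : ∀ i : ℕ, e (i % n) ∈ s := fun i => ⟨i % n, Nat.mod_lt i npos, rfl⟩
    set c : ℕ → Fin 2 := fun i => C ⟨e (i % n), hmem i⟩ with hc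
    have hstep : ∀ i, c (i + 1) = c i + 1 := by
      intro i
      have hadj : ((Multigraph.lineGraph G).induce s).Adj ⟨e (i % n), hmem i⟩
          ⟨e ((i+1) % n), hmem (i+1)⟩ := by
        show (Multigraph.lineGraph G).Adj (e (i % n)) (e ((i+1) % n))
        rw [hadjchar _ _ (Nat.mod_lt i npos) (Nat.mod_lt (i+1) npos)]
        left
        exact (m1 i).symm
      have hne := C.valid hadj
      have fin2 : ∀ a b : Fin 2, a ≠ b → b = a + 1 := by decide
      exact fin2 _ _ hne
    have hpar : ∀ k, c k = if Even k then c 0 else c 0 + 1 := by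
      intro k
      induction k with
      | zero => simp
      | succ k ih =>
        rw [hstep k, ih]
        by_cases hk : Even k
        · rw [if_pos hk, if_neg (by simp [Nat.even_add_one, hk])]
        · rw [if_neg hk, if_pos (by simp [Nat.even_add_one, hk])]
          have : ∀ a : Fin 2, a + 1 + 1 = a := by decide
          exact this _
    have h0 : c n = c 0 := by
      have hidx : n % n = 0 % n := by rw [Nat.mod_self, Nat.zero_mod]
      show C ⟨e (n % n), hmem n⟩ = C ⟨e (0 % n), hmem 0⟩
      exact congrArg C (Subtype.ext (congrArg e hidx))
    rw [hpar n, if_neg (Nat.not_even_iff_odd.mpr hodd)] at h0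
    have : ∀ a : Fin 2, a + 1 ≠ a := by decide
    exact this _ h0
  -- clique number
  have hub : ∀ m ∈ {m | ∃ t : Finset ↥s, ((Multigraph.lineGraph G).induce s).IsNClique m t}, m ≤ 2 := by
    rintro m ⟨t, ht⟩
    by_contra hm
    push_neg at hm
    have hcard : 3 ≤ t.card := by rw [ht.2]; omega
    obtain ⟨x, hx⟩ := Finset.card_pos.mp (show 0 < t.card by omega)
    obtain ⟨y, hy⟩ := Finset.card_pos.mp (show 0 < (t.erase x).card by
      rw [Finset.card_erase_of_mem hx]; omega)
    obtain ⟨z, hz⟩ := Finset.card_pos.mp (show 0 < ((t.erase x).erase y).card by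
      rw [Finset.card_erase_of_mem hy, Finset.card_erase_of_mem hx]; omega)
    have hyt := Finset.mem_of_mem_erase hy
    have hzt := Finset.mem_of_mem_erase (Finset.mem_of_mem_erase hz)
    have hxy : x ≠ y := fun h => (Finset.ne_of_mem_erase hy) h.symm
    have hxz : x ≠ z := fun h => (Finset.ne_of_mem_erase (Finset.mem_of_mem_erase hz)) h.symm
    have hyz : y ≠ z := fun h => (Finset.ne_of_mem_erase hz) h.symm
    obtain ⟨i, hi, hix⟩ := x.2
    obtain ⟨j, hj, hjy⟩ := y.2
    obtain ⟨k, hk, hkz⟩ := z.2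
    have hij : i ≠ j := fun h => hxy (Subtype.ext (by rw [← hix, ← hjy, h]))
    have hik : i ≠ k := fun h => hxz (Subtype.ext (by rw [← hix, ← hkz, h]))
    have hjk : j ≠ k := fun h => hyz (Subtype.ext (by rw [← hjy, ← hkz, h]))
    have getadj : ∀ (u v : ↥s), u ∈ t → v ∈ t → u ≠ v → ∀ iu iv, e iu = u.1 → e iv = v.1 →
        iu < n → iv < n → (iv = (iu + 1) % n ∨ iu = (iv + 1) % n) := by
      intro u v hu hv huv iu iv heu hev hiu hiv
      have hadj := ht.1 (Finset.mem_coe.mpr hu) (Finset.mem_coe.mpr hv) huv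
      have hadj' : (Multigraph.lineGraph G).Adj (e iu) (e iv) := by
        have hadj2 : (Multigraph.lineGraph G).Adj u.1 v.1 := hadj
        rw [← heu, ← hev] at hadj2
        exact hadj2
      exact (hadjchar _ _ hiu hiv).mp hadj'
    have r1 := getadj x y hx hyt hxy i j hix hjy hi hj
    have r2 := getadj x z hx hzt hxz i k hix hkz hi hk
    have r3 := getadj y z hyt hzt hyz j k hjy hkz hj hk
    simp only [hmod i hi, hmod j hj, hmod k hk] at r1 r2 r3
    split_ifs at r1 r2 r3 <;> omega
  have hclique : cliqNum ((Multigraph.lineGraph G).induce s) = 2 := by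
    apply le_antisymm
    · exact csSup_le ⟨0, ⟨∅, by simp⟩⟩ hub
    · apply le_csSup ⟨2, hub⟩
      have h01 : e 0 ≠ e 1 := fun h => by have := einj 0 1 (by omega) (by omega) h; omega
      have hadj01 : ((Multigraph.lineGraph G).induce s).Adj ⟨e 0, ⟨0, by omega, rfl⟩⟩
          ⟨e 1, ⟨1, by omega, rfl⟩⟩ := by
        show (Multigraph.lineGraph G).Adj (e 0) (e 1)
        rw [hadjchar 0 1 (by omega) (by omega)]
        left
        rw [Nat.mod_eq_of_lt (by omega)]
      refine ⟨{⟨e 0, ⟨0, by omega, rfl⟩⟩, ⟨e 1, ⟨1, by omega, rfl⟩⟩}, ?_, ?_⟩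
      · intro u hu v hv huv
        simp only [Finset.coe_insert, Set.mem_insert_iff, Finset.coe_singleton,
          Set.mem_singleton_iff] at hu hv
        rcases hu with rfl | rfl <;> rcases hv with rfl | rfl
        · exact absurd rfl huv
        · exact hadj01
        · exact hadj01.symm
        · exact absurd rfl huv
      · rw [Finset.card_insert_of_notMem (by simp [Subtype.ext_iff, h01]),
          Finset.card_singleton]
  have hchrom : chromNum ((Multigraph.lineGraph G).induce s) = 3 := by
    have hle : sInf {m | ((Multigraph.lineGraph G).induce s).Colorable m} ≤ 3 :=
      Nat.sInf_le hcol3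
    have hmem := Nat.sInf_mem (⟨3, hcol3⟩ :
      Set.Nonempty {m | ((Multigraph.lineGraph G).induce s).Colorable m})
    have h2' : ¬ (sInf {m | ((Multigraph.lineGraph G).induce s).Colorable m} ≤ 2) :=
      fun hle2 => hncol2 (SimpleGraph.Colorable.mono hle2 hmem)
    show sInf {m | ((Multigraph.lineGraph G).induce s).Colorable m} = 3
    omega
  have := hperf s
  rw [hchrom, hclique] at this
  omega


/-- **Maffray's structure theorem.** Every block of a line perfect multigraph is
either bipartite, a `K₄` with possibly multiple edges, or a `K_{1,1,n}` with
possibly multiple edges. -/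
theorem stmt_9 {V E : Type*} [Fintype V] [Fintype E] (G : Multigraph V E)
    (hperf : IsPerfect (Multigraph.lineGraph G)) (F : Set E) (hF : G.IsBlock F) :
    -- the block is bipartite, or
    (∃ X : Set V, ∀ e ∈ F, ∀ u w : V, G.ends e = s(u, w) → (u ∈ X ↔ w ∉ X)) ∨
    -- the block is a `K₄` with possibly multiple edges, or
    ((G.supp F).ncard = 4 ∧
      ∀ u ∈ G.supp F, ∀ w ∈ G.supp F, u ≠ w → G.EdgeBetweenOn F u w) ∨
    -- the block is a `K_{1,1,n}` with possibly multiple edges: two vertices `a, b`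
    -- joined to each other and to every other vertex of the block, all remaining
    -- vertices forming an independent set.
    (∃ a b : V, a ≠ b ∧ a ∈ G.supp F ∧ b ∈ G.supp F ∧ G.EdgeBetweenOn F a b ∧
      (∀ x ∈ G.supp F, x ≠ a → x ≠ b →
        G.EdgeBetweenOn F a x ∧ G.EdgeBetweenOn F b x) ∧
      ∀ e ∈ F, a ∈ G.ends e ∨ b ∈ G.ends e) := by
  classical
  obtain ⟨⟨hconn, hpre⟩, -⟩ := hF
  set S := G.simpleOn F with hSdef
  set W := G.supp F with hWdef
  have hadjW : ∀ {u v : V}, S.Adj u v → u ∈ W := by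
    rintro u v ⟨e, heF, hends⟩
    exact ⟨e, heF, by rw [hends]; exact Sym2.mem_iff.mpr (Or.inl rfl)⟩
  have toE : ∀ {u' w' : V}, S.Adj u' w' → G.EdgeBetweenOn F u' w' := fun h => h
  have hA : ∀ n (w : ℕ → V), Odd n → 5 ≤ n → FW S n w → w n = w 0 →
      (∀ i < n, ∀ j < n, w i = w j → i = j) → False := noOddCyc G hperf F
  by_cases hbip : ∃ X : Set V, ∀ e ∈ F, ∀ u w : V, G.ends e = s(u, w) → (u ∈ X ↔ w ∉ X)
  · exact Or.inl hbip
  right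
  obtain ⟨r0⟩ := hconn.nonempty
  set r : V := r0.1 with hr
  set X : Set V := {u | ∃ n w', Odd n ∧ FW S n w' ∧ w' 0 = r ∧ w' n = u} with hX
  have hnot : ¬ ∀ e ∈ F, ∀ u w : V, G.ends e = s(u, w) → (u ∈ X ↔ w ∉ X) :=
    fun h => hbip ⟨X, h⟩
  push_neg at hnot
  obtain ⟨e0, he0F, u, v, hends0, hiff⟩ := hnot
  have hadjuv : S.Adj u v := ⟨e0, he0F, hends0⟩
  have huW : u ∈ W := hadjW hadjuv
  have hvW : v ∈ W := hadjW hadjuv.symm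
  -- a closed odd walk exists
  have hclosed : ∃ nc, ∃ wc : ℕ → V, FW S nc wc ∧ wc nc = wc 0 ∧ Odd nc := by
    have mkwalk : ∀ z : V, z ∈ W → ∃ n w', FW S n w' ∧ w' 0 = r ∧ w' n = z := by
      intro z hz
      obtain ⟨n, w', h1, h2, h3, _⟩ := reach_fwalk (hconn.preconnected r0 ⟨z, hz⟩)
      exact ⟨n, w', h1, h2, h3⟩
    have join : ∀ n1 n2 (w1 w2 : ℕ → V), FW S n1 w1 → FW S n2 w2 →
        w1 0 = r → w2 0 = r → w1 n1 = u → w2 n2 = v →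
        ∃ ww : ℕ → V, FW S (n1 + 1 + n2) ww ∧ ww (n1 + 1 + n2) = ww 0 := by
      intro n1 n2 w1 w2 hw1 hw2 h10 h20 h1n h2n
      have hedge : FW S 1 (fun k => if k = 0 then u else v) := by
        intro i hi
        have hi0 : i = 0 := by omega
        subst hi0
        simpa using hadjuv
      obtain ⟨hc1, hc10, hc1n⟩ := FW.concat hw1 hedge (by simp [h1n])
      have hrev := FW.reverse hw2
      obtain ⟨hc2, hc20, hc2n⟩ := FW.concat hc1 hrev (by simpa [hc1n] using h2n)
      refine ⟨_, hc2, ?_⟩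
      beta_reduce at hc2n hc20 hc10
      rw [hc2n, hc20, hc10, h10]
      simpa using h20
    rcases hiff with ⟨hu, hv⟩ | ⟨hu, hv⟩
    · obtain ⟨n1, w1, hodd1, hw1, h10, h1n⟩ := hu
      obtain ⟨n2, w2, hodd2, hw2, h20, h2n⟩ := hv
      obtain ⟨ww, hW1, hW2⟩ := join n1 n2 w1 w2 hw1 hw2 h10 h20 h1n h2n
      refine ⟨n1 + 1 + n2, ww, hW1, hW2, ?_⟩
      rw [Nat.odd_iff] at hodd1 hodd2 ⊢
      omega
    · obtain ⟨n1, w1, hw1, h10, h1n⟩ := mkwalk u huW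
      obtain ⟨n2, w2, hw2, h20, h2n⟩ := mkwalk v hvW
      have he1 : ¬ Odd n1 := fun h => hu ⟨n1, w1, h, hw1, h10, h1n⟩
      have he2 : ¬ Odd n2 := fun h => hv ⟨n2, w2, h, hw2, h20, h2n⟩
      obtain ⟨ww, hW1, hW2⟩ := join n1 n2 w1 w2 hw1 hw2 h10 h20 h1n h2n
      refine ⟨n1 + 1 + n2, ww, hW1, hW2, ?_⟩
      rw [Nat.odd_iff] at he1 he2 ⊢
      omega
  obtain ⟨nc, wc, hwc, hwccl, hwcodd⟩ := hclosed
  obtain ⟨a, b, c, hab, hbc, hca⟩ := odd_closed hA nc wc hwc hwccl hwcodd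
  have haW : a ∈ W := hadjW hab
  have hbW : b ∈ W := hadjW hbc
  have hcW : c ∈ W := hadjW hca
  -- every vertex adjacent to one triangle vertex is adjacent to a second one
  have two_nbrs : ∀ p q rr x : V, S.Adj p q → S.Adj q rr → S.Adj rr p →
      x ≠ p → x ≠ q → x ≠ rr → S.Adj x p → (S.Adj x q ∨ S.Adj x rr) := by
    intro p q rr x hpq hqr hrp hxp hxq hxr hAxp
    have hxW : x ∈ W := hadjW hAxp
    have hqW : q ∈ W := hadjW hqr
    have hreach := hpre p ⟨x, ⟨hxW, by simp [hxp]⟩⟩ ⟨q, ⟨hqW, by simp [hpq.ne']⟩⟩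
    obtain ⟨n0, w0, hw0, h00, h0n, h0mem⟩ := reach_fwalk hreach
    obtain ⟨m, Q, hQFW, hQ0, hQm, hQPr, hQfirst, hQinj⟩ :=
      min_walk (S := S) (T := {p, q, rr}) (Pr := fun z => z ≠ p)
        ⟨n0, w0, hw0, h00, by rw [h0n]; simp, fun i hi => by simpa using (h0mem i hi).2⟩
    have hxT : x ∉ ({p, q, rr} : Set V) := by simp [hxp, hxq, hxr]
    have hm1 : 1 ≤ m := by
      rcases Nat.eq_zero_or_pos m with h | h
      · exfalso
        rw [h, hQ0] at hQm
        exact hxT hQm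
      · exact h
    have htne : Q m ≠ p := hQPr m le_rfl
    have htmem : Q m = q ∨ Q m = rr := by
      have h := hQm
      simp only [Set.mem_insert_iff, Set.mem_singleton_iff] at h
      tauto
    rcases Nat.even_or_odd m with hEv | hOd
    · -- even length: contradiction via cycle of length m+3
      exfalso
      have core2 : ∀ u' : V, S.Adj (Q m) u' → S.Adj u' p →
          u' ∈ ({p, q, rr} : Set V) → False := by
        intro u' h1 h2 hu'T
        refine cycTail hA (m := m) (ℓ := 2) (Q := Q)
          (p := fun k => if k = 0 then u' else p) hQFW hQinj ?_ ?_ ?_ ?_ ?_ ?_ ?_ ?_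
        · intro i hi j hj
          interval_cases j
          · simp only [if_pos rfl]
            intro hcon
            rcases eq_or_lt_of_le hi with h | h
            · rw [h] at hcon
              exact h1.ne hcon
            · exact hQfirst i h (by rw [hcon]; exact hu'T)
          · simp only [if_neg one_ne_zero]
            exact hQPr i hi
        · intro i hi j hj heq
          have hne := h2.ne
          interval_cases i <;> interval_cases j
          · rfl
          · exact absurd (by simpa using heq) hne
          · exact absurd (Eq.symm (by simpa using heq)) hne
          · rfl
        · simpa using h1
        · intro i hi
          have hi0 : i = 0 := by omega
          subst hi0
          simpa using h2
        · simpa [hQ0] using hAxp.symm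
        · rw [Nat.even_iff] at hEv
          rw [Nat.odd_iff]
          omega
        · rw [Nat.even_iff] at hEv
          omega
        · omega
      rcases htmem with ht | ht
      · exact core2 rr (by rw [ht]; exact hqr) hrp (by simp)
      · exact core2 q (by rw [ht]; exact hqr.symm) hpq.symm (by simp)
    · -- odd length: m = 1 gives the conclusion, otherwise contradiction
      rcases eq_or_lt_of_le hm1 with hm | hm
      · have : S.Adj x (Q 1) := by
          have := hQFW 0 (by omega)
          rwa [hQ0] at this
        rcases htmem with ht | ht
        · left
          rw [← hm] at ht
          rwa [ht] at this
        · right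
          rw [← hm] at ht
          rwa [ht] at this
      · exfalso
        refine cycTail hA (m := m) (ℓ := 1) (Q := Q) (p := fun _ => p)
          hQFW hQinj ?_ ?_ ?_ ?_ ?_ ?_ ?_ ?_
        · intro i hi j hj
          exact hQPr i hi
        · intro i hi j hj _
          omega
        · rcases htmem with ht | ht
          · rw [ht]; exact hpq.symm
          · rw [ht]; exact hrp
        · intro i hi
          omega
        · simpa [hQ0] using hAxp.symm
        · rw [Nat.odd_iff] at hOd ⊢
          omega
        · rw [Nat.odd_iff] at hOd
          omega
        · omega
  -- no edge between two non-triangle vertices when one of them has two triangle neighbors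
  have no_edge : ∀ p q rr x y : V, S.Adj p q → S.Adj q rr → S.Adj rr p →
      x ≠ p → x ≠ q → x ≠ rr → y ≠ p → y ≠ q → y ≠ rr →
      S.Adj x y → S.Adj y p → S.Adj y q → False := by
    intro p q rr x y hpq hqr hrp hxp hxq hxr hyp hyq hyr hxy hYp hYq
    have hxW : x ∈ W := hadjW hxy
    have hpW : p ∈ W := hadjW hpq
    have hreach := hpre y ⟨x, ⟨hxW, by simp [hxy.ne]⟩⟩ ⟨p, ⟨hpW, by simp [Ne.symm hyp]⟩⟩
    obtain ⟨n0, w0, hw0, h00, h0n, h0mem⟩ := reach_fwalk hreach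
    obtain ⟨m, Q, hQFW, hQ0, hQm, hQPr, hQfirst, hQinj⟩ :=
      min_walk (S := S) (T := {p, q, rr}) (Pr := fun z => z ≠ y)
        ⟨n0, w0, hw0, h00, by rw [h0n]; simp, fun i hi => by simpa using (h0mem i hi).2⟩
    have hxT : x ∉ ({p, q, rr} : Set V) := by simp [hxp, hxq, hxr]
    have hm1 : 1 ≤ m := by
      rcases Nat.eq_zero_or_pos m with h | h
      · exfalso
        rw [h, hQ0] at hQm
        exact hxT hQm
      · exact h
    have htmem := hQm
    simp only [Set.mem_insert_iff, Set.mem_singleton_iff] at htmem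
    rcases Nat.even_or_odd m with hEv | hOd
    · -- even: cycle x ... t s' y x of length m+3
      have core2 : ∀ s' : V, S.Adj (Q m) s' → S.Adj s' y →
          s' ∈ ({p, q, rr} : Set V) → False := by
        intro s' h1 h2 hsT
        refine cycTail hA (m := m) (ℓ := 2) (Q := Q)
          (p := fun k => if k = 0 then s' else y) hQFW hQinj ?_ ?_ ?_ ?_ ?_ ?_ ?_ ?_
        · intro i hi j hj
          interval_cases j
          · simp only [if_pos rfl]
            intro hcon
            rcases eq_or_lt_of_le hi with h | h
            · rw [h] at hcon
              exact h1.ne hcon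
            · exact hQfirst i h (by rw [hcon]; exact hsT)
          · simp only [if_neg one_ne_zero]
            exact hQPr i hi
        · intro i hi j hj heq
          have hne := h2.ne
          interval_cases i <;> interval_cases j
          · rfl
          · exact absurd (by simpa using heq) hne
          · exact absurd (Eq.symm (by simpa using heq)) hne
          · rfl
        · simpa using h1
        · intro i hi
          have hi0 : i = 0 := by omega
          subst hi0
          simpa using h2
        · simpa [hQ0] using hxy.symm
        · rw [Nat.even_iff] at hEv
          rw [Nat.odd_iff]
          omega
        · rw [Nat.even_iff] at hEv
          omega
        · omega
      rcases htmem with ht | ht | ht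
      · exact core2 q (by rw [ht]; exact hpq) hYq.symm (by simp)
      · exact core2 p (by rw [ht]; exact hpq.symm) hYp.symm (by simp)
      · exact core2 p (by rw [ht]; exact hrp) hYp.symm (by simp)
    · -- odd: cycle x ... t u s' y x of length m+4
      have core3 : ∀ u' s' : V, S.Adj (Q m) u' → S.Adj u' s' → S.Adj s' y →
          u' ∈ ({p, q, rr} : Set V) → s' ∈ ({p, q, rr} : Set V) → Q m ≠ s' → False := by
        intro u' s' h1 h2 h3 huT hsT hts
        have huy : u' ≠ y := by
          have huT' := huT
          simp only [Set.mem_insert_iff, Set.mem_singleton_iff] at huT'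
          rcases huT' with rfl | rfl | rfl
          · exact Ne.symm hyp
          · exact Ne.symm hyq
          · exact Ne.symm hyr
        have hsy : s' ≠ y := h3.ne
        have hus : u' ≠ s' := h2.ne
        refine cycTail hA (m := m) (ℓ := 3) (Q := Q)
          (p := fun k => if k = 0 then u' else if k = 1 then s' else y) hQFW hQinj
          ?_ ?_ ?_ ?_ ?_ ?_ ?_ ?_
        · intro i hi j hj
          have hyne : Q i ≠ y := hQPr i hi
          interval_cases j
          · simp only [if_pos rfl]
            intro hcon
            rcases eq_or_lt_of_le hi with h | h
            · rw [h] at hcon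
              exact h1.ne hcon
            · exact hQfirst i h (by rw [hcon]; exact huT)
          · simp only [if_neg one_ne_zero, if_pos rfl]
            intro hcon
            rcases eq_or_lt_of_le hi with h | h
            · rw [h] at hcon
              exact hts hcon
            · exact hQfirst i h (by rw [hcon]; exact hsT)
          · simpa using hyne
        · intro i hi j hj heq
          interval_cases i <;> interval_cases j
          · rfl
          · exact absurd (by simpa using heq) hus
          · exact absurd (by simpa using heq) huy
          · exact absurd (Eq.symm (by simpa using heq)) hus
          · rfl
          · exact absurd (by simpa using heq) hsy
          · exact absurd (Eq.symm (by simpa using heq)) huy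
          · exact absurd (Eq.symm (by simpa using heq)) hsy
          · rfl
        · simpa using h1
        · intro i hi
          have : i = 0 ∨ i = 1 := by omega
          rcases this with rfl | rfl
          · simpa using h2
          · simpa using h3
        · simpa [hQ0] using hxy.symm
        · rw [Nat.odd_iff] at hOd ⊢
          omega
        · omega
        · omega
      rcases htmem with ht | ht | ht
      · -- t = p: chain p ~ rr ~ q ~ y
        exact core3 rr q (by rw [ht]; exact hrp.symm) hqr.symm hYq.symm (by simp) (by simp)
          (by rw [ht]; exact hpq.ne)
      · -- t = q: chain q ~ rr ~ p ~ y
        exact core3 rr p (by rw [ht]; exact hqr) hrp hYp.symm (by simp) (by simp)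
          (by rw [ht]; exact hpq.ne')
      · -- t = rr: chain rr ~ q ~ p ~ y
        exact core3 q p (by rw [ht]; exact hqr.symm) hpq.symm hYp.symm (by simp) (by simp)
          (by rw [ht]; exact hrp.ne)
  -- every non-triangle vertex of W has a triangle neighbor
  have nbr_in_T : ∀ z, z ∈ W → z ≠ a → z ≠ b → z ≠ c →
      (S.Adj z a ∨ S.Adj z b ∨ S.Adj z c) := by
    intro z hzW hza hzb hzc
    obtain ⟨n0, w0, hw0, h00, h0n, _⟩ := reach_fwalk (hconn.preconnected ⟨z, hzW⟩ ⟨a, haW⟩)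
    obtain ⟨m, Q, hQFW, hQ0, hQm, _, hQfirst, hQinj⟩ :=
      min_walk (S := S) (T := {a, b, c}) (Pr := fun _ => True)
        ⟨n0, w0, hw0, h00, by rw [h0n]; simp, fun i hi => trivial⟩
    have hzT : z ∉ ({a, b, c} : Set V) := by simp [hza, hzb, hzc]
    have hm1 : 1 ≤ m := by
      rcases Nat.eq_zero_or_pos m with h | h
      · exfalso
        rw [h, hQ0] at hQm
        exact hzT hQm
      · exact h
    rcases eq_or_lt_of_le hm1 with hm | hm
    · have hadj1 : S.Adj z (Q 1) := by
        have := hQFW 0 (by omega)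
        rwa [hQ0] at this
      have h := hQm
      rw [← hm] at h
      simp only [Set.mem_insert_iff, Set.mem_singleton_iff] at h
      rcases h with h | h | h
      · exact Or.inl (h ▸ hadj1)
      · exact Or.inr (Or.inl (h ▸ hadj1))
      · exact Or.inr (Or.inr (h ▸ hadj1))
    · exfalso
      set y := Q (m - 1) with hy
      set z2 := Q (m - 2) with hz2
      have hyT : y ∉ ({a, b, c} : Set V) := hQfirst (m - 1) (by omega)
      have hz2T : z2 ∉ ({a, b, c} : Set V) := hQfirst (m - 2) (by omega)
      have hyt : S.Adj y (Q m) := by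
        have := hQFW (m - 1) (by omega)
        rwa [show m - 1 + 1 = m by omega] at this
      have hz2y : S.Adj z2 y := by
        have := hQFW (m - 2) (by omega)
        rwa [show m - 2 + 1 = m - 1 by omega] at this
      simp only [Set.mem_insert_iff, Set.mem_singleton_iff, not_or] at hyT hz2T
      obtain ⟨hya, hyb, hyc⟩ := hyT
      obtain ⟨hz2a, hz2b, hz2c⟩ := hz2T
      have htmem := hQm
      simp only [Set.mem_insert_iff, Set.mem_singleton_iff] at htmem
      rcases htmem with ht | ht | ht
      · have hYa : S.Adj y a := ht ▸ hyt
        rcases two_nbrs a b c y hab hbc hca hya hyb hyc hYa with h2 | h2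
        · exact no_edge a b c z2 y hab hbc hca hz2a hz2b hz2c hya hyb hyc hz2y hYa h2
        · exact no_edge c a b z2 y hca hab hbc hz2c hz2a hz2b hyc hya hyb hz2y h2 hYa
      · have hYb : S.Adj y b := ht ▸ hyt
        rcases two_nbrs b c a y hbc hca hab hyb hyc hya hYb with h2 | h2
        · exact no_edge b c a z2 y hbc hca hab hz2b hz2c hz2a hyb hyc hya hz2y hYb h2
        · exact no_edge a b c z2 y hab hbc hca hz2a hz2b hz2c hya hyb hyc hz2y h2 hYb
      · have hYc : S.Adj y c := ht ▸ hyt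
        rcases two_nbrs c a b y hca hab hbc hyc hya hyb hYc with h2 | h2
        · exact no_edge c a b z2 y hca hab hbc hz2c hz2a hz2b hyc hya hyb hz2y hYc h2
        · exact no_edge b c a z2 y hbc hca hab hz2b hz2c hz2a hyb hyc hya hz2y h2 hYc
  -- non-triangle vertices are independent
  have indep : ∀ x y, x ≠ a → x ≠ b → x ≠ c → y ≠ a → y ≠ b → y ≠ c →
      S.Adj x y → False := by
    intro x y hxa hxb hxc hya hyb hyc hxy
    have hyW : y ∈ W := hadjW hxy.symm
    rcases nbr_in_T y hyW hya hyb hyc with h | h | h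
    · rcases two_nbrs a b c y hab hbc hca hya hyb hyc h with h2 | h2
      · exact no_edge a b c x y hab hbc hca hxa hxb hxc hya hyb hyc hxy h h2
      · exact no_edge c a b x y hca hab hbc hxc hxa hxb hyc hya hyb hxy h2 h
    · rcases two_nbrs b c a y hbc hca hab hyb hyc hya h with h2 | h2
      · exact no_edge b c a x y hbc hca hab hxb hxc hxa hyb hyc hya hxy h h2
      · exact no_edge a b c x y hab hbc hca hxa hxb hxc hya hyb hyc hxy h2 h
    · rcases two_nbrs c a b y hca hab hbc hyc hya hyb h with h2 | h2
      · exact no_edge c a b x y hca hab hbc hxc hxa hxb hyc hya hyb hxy h h2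
      · exact no_edge b c a x y hbc hca hab hxb hxc hxa hyb hyc hya hxy h2 h
  -- every non-triangle vertex has two triangle neighbors
  have twoN : ∀ z, z ∈ W → z ≠ a → z ≠ b → z ≠ c →
      (S.Adj z a ∧ S.Adj z b) ∨ (S.Adj z b ∧ S.Adj z c) ∨ (S.Adj z a ∧ S.Adj z c) := by
    intro z hz h1 h2 h3
    rcases nbr_in_T z hz h1 h2 h3 with h | h | h
    · rcases two_nbrs a b c z hab hbc hca h1 h2 h3 h with h' | h'
      · exact Or.inl ⟨h, h'⟩
      · exact Or.inr (Or.inr ⟨h, h'⟩)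
    · rcases two_nbrs b c a z hbc hca hab h2 h3 h1 h with h' | h'
      · exact Or.inr (Or.inl ⟨h, h'⟩)
      · exact Or.inl ⟨h', h⟩
    · rcases two_nbrs c a b z hca hab hbc h3 h1 h2 h with h' | h'
      · exact Or.inr (Or.inr ⟨h', h⟩)
      · exact Or.inr (Or.inl ⟨h', h⟩)
  by_cases hx3 : ∃ x, x ∈ W ∧ x ≠ a ∧ x ≠ b ∧ x ≠ c ∧ S.Adj x a ∧ S.Adj x b ∧ S.Adj x c
  · -- K4
    left
    obtain ⟨x, hxW, hxa, hxb, hxc, hAa, hAb, hAc⟩ := hx3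
    have hsub : W ⊆ {a, b, c, x} := by
      intro z hz
      simp only [Set.mem_insert_iff, Set.mem_singleton_iff]
      by_contra hcon
      push_neg at hcon
      obtain ⟨hza, hzb, hzc, hzx⟩ := hcon
      rcases twoN z hz hza hzb hzc with ⟨h1, h2⟩ | ⟨h1, h2⟩ | ⟨h1, h2⟩
      · -- cycle z a x c b
        exact fiveCyc hA h1 hAa.symm hAc hbc.symm h2.symm
          hzx hzc hca.ne' hab.ne hxb
      · -- cycle z b x a c
        exact fiveCyc hA h1 hAb.symm hAa hca.symm h2.symm
          hzx hza hab.ne' hbc.ne hxc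
      · -- cycle z a x b c
        exact fiveCyc hA h1 hAa.symm hAb hbc h2.symm
          hzx hzb hab.ne hca.ne' hxc
    have hWeq : W = {a, b, c, x} := by
      apply Set.Subset.antisymm hsub
      intro z hz
      simp only [Set.mem_insert_iff, Set.mem_singleton_iff] at hz
      rcases hz with rfl | rfl | rfl | rfl
      exacts [haW, hbW, hcW, hxW]
    constructor
    · rw [hWeq]
      rw [Set.ncard_insert_of_notMem (by simp [hab.ne, hca.ne', Ne.symm hxa]),
        Set.ncard_insert_of_notMem (by simp [hbc.ne, Ne.symm hxb]),
        Set.ncard_insert_of_notMem (by simp [Ne.symm hxc]),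
        Set.ncard_singleton]
    · intro u' hu w' hw huw
      rw [hWeq] at hu hw
      simp only [Set.mem_insert_iff, Set.mem_singleton_iff] at hu hw
      rcases hu with rfl | rfl | rfl | rfl <;> rcases hw with rfl | rfl | rfl | rfl <;>
        first
        | exact absurd rfl huw
        | exact toE hab
        | exact toE hab.symm
        | exact toE hbc
        | exact toE hbc.symm
        | exact toE hca
        | exact toE hca.symm
        | exact toE hAa
        | exact toE hAa.symm
        | exact toE hAb
        | exact toE hAb.symm
        | exact toE hAc
        | exact toE hAc.symm
  · -- K_{1,1,n}
    right
    have hno3 : ∀ z, z ∈ W → z ≠ a → z ≠ b → z ≠ c →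
        S.Adj z a → S.Adj z b → S.Adj z c → False := by
      intro z h1 h2 h3 h4 h5 h6 h7
      exact hx3 ⟨z, h1, h2, h3, h4, h5, h6, h7⟩
    by_cases hout : ∃ z, z ∈ W ∧ z ≠ a ∧ z ≠ b ∧ z ≠ c
    · -- nonempty outside: all outside vertices attach to the same pair
      have finish : ∀ p q rr x0 : V, S.Adj p q → S.Adj q rr → S.Adj rr p →
          (∀ z, z ∈ W → z ≠ p → z ≠ q → z ≠ rr →
            (S.Adj z p ∧ S.Adj z q) ∨ (S.Adj z q ∧ S.Adj z rr) ∨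
            (S.Adj z p ∧ S.Adj z rr)) →
          (∀ z, z ∈ W → z ≠ p → z ≠ q → z ≠ rr →
            S.Adj z p → S.Adj z q → S.Adj z rr → False) →
          (∀ x y, x ≠ p → x ≠ q → x ≠ rr → y ≠ p → y ≠ q → y ≠ rr →
            S.Adj x y → False) →
          x0 ∈ W → x0 ≠ p → x0 ≠ q → x0 ≠ rr → S.Adj x0 p → S.Adj x0 q →
          (∃ a' b' : V, a' ≠ b' ∧ a' ∈ W ∧ b' ∈ W ∧ G.EdgeBetweenOn F a' b' ∧
            (∀ x ∈ W, x ≠ a' → x ≠ b' →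
              G.EdgeBetweenOn F a' x ∧ G.EdgeBetweenOn F b' x) ∧
            ∀ e ∈ F, a' ∈ G.ends e ∨ b' ∈ G.ends e) := by
        intro p q rr x0 hpq hqr hrp twoN' hno3' indep' hx0W hx0p hx0q hx0r hxp hxq
        have hpW : p ∈ W := hadjW hpq
        have hqW : q ∈ W := hadjW hqr
        have hnxr : ¬ S.Adj x0 rr := fun h => hno3' x0 hx0W hx0p hx0q hx0r hxp hxq h
        have hallz : ∀ z, z ∈ W → z ≠ p → z ≠ q → z ≠ rr →
            S.Adj z p ∧ S.Adj z q ∧ ¬ S.Adj z rr := by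
          intro z hz h1 h2 h3
          rcases twoN' z hz h1 h2 h3 with ⟨u1, u2⟩ | ⟨u1, u2⟩ | ⟨u1, u2⟩
          · exact ⟨u1, u2, fun u3 => hno3' z hz h1 h2 h3 u1 u2 u3⟩
          · exfalso
            rcases eq_or_ne z x0 with rfl | hzx
            · exact hnxr u2
            · -- cycle x0 q z rr p
              exact fiveCyc hA hxq u1.symm u2 hrp hxp.symm
                (Ne.symm hzx) hx0r hqr.ne hpq.ne' h1
          · exfalso
            rcases eq_or_ne z x0 with rfl | hzx
            · exact hnxr u2
            · -- cycle x0 p z rr q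
              exact fiveCyc hA hxp u1.symm u2 hqr.symm hxq.symm
                (Ne.symm hzx) hx0r hrp.ne' hpq.ne h2
        refine ⟨p, q, hpq.ne, hpW, hqW, toE hpq, ?_, ?_⟩
        · intro v' hv hvp hvq
          rcases eq_or_ne v' rr with rfl | hvr
          · exact ⟨toE hrp.symm, toE hqr⟩
          · obtain ⟨u1, u2, -⟩ := hallz v' hv hvp hvq hvr
            exact ⟨toE u1.symm, toE u2.symm⟩
        · intro e he
          obtain ⟨u', v', hends⟩ :=
            Sym2.inductionOn (f := fun z => ∃ u' v', z = s(u', v'))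
              (G.ends e) (fun u' v' => ⟨u', v', rfl⟩)
          by_contra hcon
          push_neg at hcon
          obtain ⟨hpe, hqe⟩ := hcon
          rw [hends, Sym2.mem_iff] at hpe hqe
          push_neg at hpe hqe
          have huv : S.Adj u' v' := ⟨e, he, hends⟩
          have hup : u' ≠ p := fun h => hpe.1 h.symm
          have hvp : v' ≠ p := fun h => hpe.2 h.symm
          have huq : u' ≠ q := fun h => hqe.1 h.symm
          have hvq : v' ≠ q := fun h => hqe.2 h.symm
          have huW : u' ∈ W := hadjW huv
          have hvW : v' ∈ W := hadjW huv.symm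
          rcases eq_or_ne u' rr with hur0 | hur
          · rcases eq_or_ne v' rr with hvr0 | hvr
            · exact huv.ne (hur0.trans hvr0.symm)
            · refine (hallz v' hvW hvp hvq hvr).2.2 ?_
              rw [← hur0]
              exact huv.symm
          · rcases eq_or_ne v' rr with hvr0 | hvr
            · refine (hallz u' huW hup huq hur).2.2 ?_
              rw [← hvr0]
              exact huv
            · exact indep' u' v' hup huq hur hvp hvq hvr huv
      obtain ⟨x0, hx0W, hx0a, hx0b, hx0c⟩ := hout
      rcases twoN x0 hx0W hx0a hx0b hx0c with ⟨h1, h2⟩ | ⟨h1, h2⟩ | ⟨h1, h2⟩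
      · exact finish a b c x0 hab hbc hca twoN hno3 indep hx0W hx0a hx0b hx0c h1 h2
      · refine finish b c a x0 hbc hca hab ?_ ?_ ?_ hx0W hx0b hx0c hx0a h1 h2
        · intro z hz u1 u2 u3
          have := twoN z hz u3 u1 u2
          tauto
        · intro z hz u1 u2 u3 v1 v2 v3
          exact hno3 z hz u3 u1 u2 v3 v1 v2
        · intro x y u1 u2 u3 v1 v2 v3 h
          exact indep x y u3 u1 u2 v3 v1 v2 h
      · refine finish a c b x0 hca.symm hbc.symm hab.symm ?_ ?_ ?_ hx0W hx0a hx0c hx0b h1 h2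
        · intro z hz u1 u2 u3
          have := twoN z hz u1 u3 u2
          tauto
        · intro z hz u1 u2 u3 v1 v2 v3
          exact hno3 z hz u1 u3 u2 v1 v3 v2
        · intro x y u1 u2 u3 v1 v2 v3 h
          exact indep x y u1 u3 u2 v1 v3 v2 h
    · -- W = {a, b, c}
      have hWT : ∀ z, z ∈ W → z = a ∨ z = b ∨ z = c := by
        intro z hz
        by_contra hcon
        push_neg at hcon
        exact hout ⟨z, hz, hcon.1, hcon.2.1, hcon.2.2⟩
      refine ⟨a, b, hab.ne, haW, hbW, toE hab, ?_, ?_⟩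
      · intro v' hv hva hvb
        have hvc : v' = c := by
          rcases hWT v' hv with h | h | h
          exacts [absurd h hva, absurd h hvb, h]
        subst hvc
        exact ⟨toE hca.symm, toE hbc⟩
      · intro e he
        obtain ⟨u', v', hends⟩ :=
          Sym2.inductionOn (f := fun z => ∃ u' v', z = s(u', v'))
            (G.ends e) (fun u' v' => ⟨u', v', rfl⟩)
        have huv : S.Adj u' v' := ⟨e, he, hends⟩
        have huW : u' ∈ W := hadjW huv
        have hvW : v' ∈ W := hadjW huv.symm
        rcases hWT u' huW with h | h | h
        · left; rw [hends, Sym2.mem_iff]; left; exact h.symm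
        · right; rw [hends, Sym2.mem_iff]; left; exact h.symm
        · rcases hWT v' hvW with h2 | h2 | h2
          · left; rw [hends, Sym2.mem_iff]; right; exact h2.symm
          · right; rw [hends, Sym2.mem_iff]; right; exact h2.symm
          · exact absurd (h.trans h2.symm) huv.ne
end

section
/- Let G = (V,E) be a multigraph on vertices v_1,…,v_n,a,b such that {v_1,…,v_n} is an independent set. If some vertex v_i is great in G, then no v_j with j ≠ i is big in G; and if some v_i is big in G, then no v_j with j ≠ i is great in G. -/
open scoped Classical

namespace Multigraph

variable {V E : Type*}

/-- `t_G(x)`: the number of edges of the triangle on the vertices `a`, `b`, `x`,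
i.e. of edges with both endpoints in `{a, b, x}`. -/
noncomputable def triCount (G : Multigraph V E) (a b x : V) : ℕ :=
  {e : E | ∀ y ∈ G.ends e, y = a ∨ y = b ∨ y = x}.ncard

/-- `x` is big (relative to `a`, `b`) if `t_G(x) ≥ max (d_G(a), d_G(b))`. -/
def Big (G : Multigraph V E) (a b x : V) : Prop :=
  max (G.degree a) (G.degree b) ≤ G.triCount a b x

/-- `x` is great (relative to `a`, `b`) if `t_G(x) > max (d_G(a), d_G(b))`. -/
def Great (G : Multigraph V E) (a b x : V) : Prop :=
  max (G.degree a) (G.degree b) < G.triCount a b x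

/-- The multigraph obtained from `G` by deleting the edges `e` and `q`. -/
def delete (G : Multigraph V E) (e q : E) : Multigraph V {r : E // r ≠ e ∧ r ≠ q} where
  ends r := G.ends r.1
  not_isDiag r := G.not_isDiag r.1

end Multigraph

/-- In a multigraph on `v₁, …, vₙ, a, b` with `{v₁, …, vₙ}` independent:
if some `vᵢ` is great then no other `vⱼ` is big, and if some `vᵢ` is big then
no other `vⱼ` is great. -/
theorem stmt_12 {V E : Type*} [Fintype V] [Fintype E] (G : Multigraph V E)
    (n : ℕ) (v : Fin n → V) (a b : V)
    (hab : a ≠ b) (hva : ∀ i, v i ≠ a) (hvb : ∀ i, v i ≠ b)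
    (hinj : Function.Injective v)
    (hcover : ∀ x : V, x = a ∨ x = b ∨ ∃ i, x = v i)
    (hind : ∀ (e : E) (i j : Fin n), G.ends e ≠ s(v i, v j)) :
    (∀ i : Fin n, G.Great a b (v i) → ∀ j : Fin n, j ≠ i → ¬ G.Big a b (v j)) ∧
      (∀ i : Fin n, G.Big a b (v i) → ∀ j : Fin n, j ≠ i → ¬ G.Great a b (v j)) := by

  have key : ∀ i j : Fin n, i ≠ j →
      G.triCount a b (v i) + G.triCount a b (v j) ≤ G.degree a + G.degree b := by
    intro i j hij
    set Si : Set E := {e : E | ∀ y ∈ G.ends e, y = a ∨ y = b ∨ y = v i} with hSi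
    set Sj : Set E := {e : E | ∀ y ∈ G.ends e, y = a ∨ y = b ∨ y = v j} with hSj
    set A : Set E := {e : E | a ∈ G.ends e} with hA
    set B : Set E := {e : E | b ∈ G.ends e} with hB
    have hvivj : v i ≠ v j := fun h => hij (hinj h)
    have hsub : ∀ (k : Fin n) (e : E),
        (∀ y ∈ G.ends e, y = a ∨ y = b ∨ y = v k) → e ∈ A ∪ B := by
      intro k e he
      by_contra hc
      simp only [Set.mem_union, hA, hB, Set.mem_setOf_eq] at hc
      push_neg at hc
      obtain ⟨ha', hb'⟩ := hc
      obtain ⟨⟨x, y⟩, hxy⟩ := Quot.exists_rep (G.ends e)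
      have hx : x ∈ G.ends e := by rw [← hxy]; exact Sym2.mem_mk_left x y
      have hy : y ∈ G.ends e := by rw [← hxy]; exact Sym2.mem_mk_right x y
      have hxk : x = v k := by
        rcases he x hx with h | h | h
        · exact absurd (h ▸ hx) ha'
        · exact absurd (h ▸ hx) hb'
        · exact h
      have hyk : y = v k := by
        rcases he y hy with h | h | h
        · exact absurd (h ▸ hy) ha'
        · exact absurd (h ▸ hy) hb'
        · exact h
      exact hind e k k (by rw [← hxy, hxk, hyk])
    have hunion : Si ∪ Sj ⊆ A ∪ B := by
      rintro e (he | he)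
      · exact hsub i e he
      · exact hsub j e he
    have hinter : Si ∩ Sj ⊆ A ∩ B := by
      rintro e ⟨hei, hej⟩
      simp only [hSi, hSj, Set.mem_setOf_eq] at hei hej
      have hmem : ∀ y ∈ G.ends e, y = a ∨ y = b := by
        intro y hy
        rcases hei y hy with h | h | h
        · exact Or.inl h
        · exact Or.inr h
        · rcases hej y hy with h' | h' | h'
          · exact Or.inl (h ▸ h')
          · exact Or.inr (h ▸ h')
          · exact absurd (h ▸ h') hvivj
      obtain ⟨⟨x, y⟩, hxy⟩ := Quot.exists_rep (G.ends e)
      have hx : x ∈ G.ends e := by rw [← hxy]; exact Sym2.mem_mk_left x y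
      have hy : y ∈ G.ends e := by rw [← hxy]; exact Sym2.mem_mk_right x y
      have hxyne : x ≠ y := by
        intro h
        exact G.not_isDiag e (by rw [← hxy, h]; exact Sym2.mk_isDiag_iff.mpr rfl)
      constructor
      · show a ∈ G.ends e
        rcases hmem x hx with h | h
        · exact h ▸ hx
        · rcases hmem y hy with h' | h'
          · exact h' ▸ hy
          · exact absurd (h.trans h'.symm) hxyne
      · show b ∈ G.ends e
        rcases hmem x hx with h | h
        · rcases hmem y hy with h' | h'
          · exact absurd (h.trans h'.symm) hxyne
          · exact h' ▸ hy
        · exact h ▸ hx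
    have hcalc : Si.ncard + Sj.ncard ≤ A.ncard + B.ncard := by
      have h1 := Set.ncard_union_add_ncard_inter Si Sj
      have h2 := Set.ncard_union_add_ncard_inter A B
      have h3 : (Si ∪ Sj).ncard ≤ (A ∪ B).ncard :=
        Set.ncard_le_ncard hunion (Set.toFinite _)
      have h4 : (Si ∩ Sj).ncard ≤ (A ∩ B).ncard :=
        Set.ncard_le_ncard hinter (Set.toFinite _)
      omega
    exact hcalc
  constructor
  · intro i hgi j hji hbj
    have h1 := key i j (fun h => hji h.symm)
    have h2 : G.degree a ≤ max (G.degree a) (G.degree b) := le_max_left _ _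
    have h3 : G.degree b ≤ max (G.degree a) (G.degree b) := le_max_right _ _
    have hg := hgi
    have hb := hbj
    unfold Multigraph.Great at hg
    unfold Multigraph.Big at hb
    omega
  · intro i hbi j hji hgj
    have h1 := key i j (fun h => hji h.symm)
    have h2 : G.degree a ≤ max (G.degree a) (G.degree b) := le_max_left _ _
    have h3 : G.degree b ≤ max (G.degree a) (G.degree b) := le_max_right _ _
    have hb := hbi
    have hg := hgj
    unfold Multigraph.Great at hg
    unfold Multigraph.Big at hb
    omega
end
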